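/- arXiv:2005.04887 — 12 statements merged into one kernel-verified Lean document; each statement's English description precedes it below -/
import Mathlib

section
/- For a 2×2 positive semidefinite Hermitian matrix ρ with trace 1 (a qubit density matrix), written with entries ρ₀₀, ρ₁₁ on the diagonal and ρ₀₁ off-diagonal, if ρ₀₀ ≥ |ρ₀₁| and ρ₁₁ ≥ |ρ₀₁|, then the maximum value of λ₀ + λ₁ over nonnegative reals λ₀, λ₁ such that ρ - λ₀|0⟩⟨0| - λ₁|1⟩⟨1| is positive semidefinite equals 1 - 2|ρ₀₁|. -/
open Matrix ComplexOrder

lemma quad2 (M : Matrix (Fin 2) (Fin 2) ℂ) (x : Fin 2 → ℂ) :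
    star x ⬝ᵥ M *ᵥ x = (starRingEnd ℂ) (x 0) * M 0 0 * x 0 + (starRingEnd ℂ) (x 0) * M 0 1 * x 1
      + (starRingEnd ℂ) (x 1) * M 1 0 * x 0 + (starRingEnd ℂ) (x 1) * M 1 1 * x 1 := by
  simp [dotProduct, mulVec, Fin.sum_univ_two]; ring

theorem stmt_0 (ρ : Matrix (Fin 2) (Fin 2) ℂ)
    (hpsd : ρ.PosSemidef) (htr : ρ.trace = 1)
    (h00 : ‖ρ 0 1‖ ≤ (ρ 0 0).re)
    (h11 : ‖ρ 0 1‖ ≤ (ρ 1 1).re) :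
    IsGreatest {s : ℝ | ∃ l0 l1 : ℝ, 0 ≤ l0 ∧ 0 ≤ l1 ∧ s = l0 + l1 ∧
        (ρ - (l0 : ℂ) • Matrix.single (0 : Fin 2) 0 (1 : ℂ)
           - (l1 : ℂ) • Matrix.single (1 : Fin 2) 1 (1 : ℂ)).PosSemidef}
      (1 - 2 * ‖ρ 0 1‖) := by
  have herm := hpsd.1
  set z : ℂ := ρ 0 1 with hz
  set c : ℝ := ‖z‖ with hc
  have hc0 : 0 ≤ c := norm_nonneg _
  have h10 : ρ 1 0 = (starRingEnd ℂ) z := by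
    have := herm.apply 1 0
    simpa using this.symm
  have him0 : (ρ 0 0).im = 0 := by
    have h2 := congrArg Complex.im (herm.apply 0 0)
    simp at h2; linarith
  have him1 : (ρ 1 1).im = 0 := by
    have h2 := congrArg Complex.im (herm.apply 1 1)
    simp at h2; linarith
  have htr' : (ρ 0 0).re + (ρ 1 1).re = 1 := by
    have := congrArg Complex.re htr
    simpa [Matrix.trace_fin_two] using this
  have hsq : c ^ 2 = z.re ^ 2 + z.im ^ 2 := by
    rw [hc, Complex.sq_norm]; simp [Complex.normSq_apply]; ring
  constructor
  · -- membership
    refine ⟨(ρ 0 0).re - c, (ρ 1 1).re - c, by linarith, by linarith, by linarith, ?_⟩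
    set N := ρ - (((ρ 0 0).re - c : ℝ) : ℂ) • Matrix.single (0 : Fin 2) 0 (1 : ℂ)
           - (((ρ 1 1).re - c : ℝ) : ℂ) • Matrix.single (1 : Fin 2) 1 (1 : ℂ) with hN
    have hN00 : N 0 0 = (c : ℂ) := by
      rw [hN]; simp [Matrix.single]
      apply Complex.ext <;> simp [him0]
    have hN11 : N 1 1 = (c : ℂ) := by
      rw [hN]; simp [Matrix.single]
      apply Complex.ext <;> simp [him1]
    have hN01 : N 0 1 = z := by rw [hN]; simp [Matrix.single, hz]
    have hN10 : N 1 0 = (starRingEnd ℂ) z := by rw [hN]; simp [Matrix.single, h10]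
    refine Matrix.PosSemidef.of_dotProduct_mulVec_nonneg ?_ ?_
    · ext i j
      fin_cases i <;> fin_cases j <;>
        simp [Matrix.conjTranspose_apply, hN00, hN11, hN01, hN10, Complex.ext_iff]
    · intro x
      rw [quad2, hN00, hN11, hN01, hN10]
      have key : (starRingEnd ℂ) (x 0) * (c : ℂ) * x 0 + (starRingEnd ℂ) (x 0) * z * x 1
          + (starRingEnd ℂ) (x 1) * ((starRingEnd ℂ) z) * x 0 + (starRingEnd ℂ) (x 1) * (c : ℂ) * x 1
          = ((c * Complex.normSq (x 0) + c * Complex.normSq (x 1)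
              + 2 * ((starRingEnd ℂ) (x 0) * z * x 1).re : ℝ) : ℂ) := by
        apply Complex.ext <;>
          simp [Complex.normSq_apply, Complex.mul_re, Complex.mul_im] <;> ring
      rw [key]
      rw [Complex.zero_le_real]
      have h1 : -(‖(starRingEnd ℂ) (x 0) * z * x 1‖) ≤ ((starRingEnd ℂ) (x 0) * z * x 1).re :=
        (abs_le.mp (Complex.abs_re_le_norm _)).1
      have h2 : ‖(starRingEnd ℂ) (x 0) * z * x 1‖
          = ‖x 0‖ * c * ‖x 1‖ := by
        simp [_root_.map_mul, hc]
      have h3 : Complex.normSq (x 0) = ‖x 0‖ ^ 2 := (Complex.sq_norm _).symm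
      have h4 : Complex.normSq (x 1) = ‖x 1‖ ^ 2 := (Complex.sq_norm _).symm
      rw [h3, h4]
      nlinarith [sq_nonneg (‖x 0‖ - ‖x 1‖), h1, h2, hc0,
        norm_nonneg (x 0), norm_nonneg (x 1)]
  · -- upper bound
    rintro s ⟨l0, l1, hl0, hl1, hs, hpsd'⟩
    set N := ρ - (l0 : ℂ) • Matrix.single (0 : Fin 2) 0 (1 : ℂ)
           - (l1 : ℂ) • Matrix.single (1 : Fin 2) 1 (1 : ℂ) with hN
    have hN00 : N 0 0 = ρ 0 0 - (l0 : ℂ) := by rw [hN]; simp [Matrix.single]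
    have hN11 : N 1 1 = ρ 1 1 - (l1 : ℂ) := by rw [hN]; simp [Matrix.single]
    have hN01 : N 0 1 = z := by rw [hN]; simp [Matrix.single, hz]
    have hN10 : N 1 0 = (starRingEnd ℂ) z := by rw [hN]; simp [Matrix.single, h10]
    set a : ℝ := (ρ 0 0).re - l0 with ha'
    set b : ℝ := (ρ 1 1).re - l1 with hb'
    have ha : 0 ≤ a := by
      have h := hpsd'.dotProduct_mulVec_nonneg ![1, 0]
      rw [quad2] at h
      have := (Complex.nonneg_iff.mp h).1
      simp [hN00, hN11, hN01, hN10] at this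
      simpa [ha'] using this
    have hb : 0 ≤ b := by
      have h := hpsd'.dotProduct_mulVec_nonneg ![0, 1]
      rw [quad2] at h
      have := (Complex.nonneg_iff.mp h).1
      simp [hN00, hN11, hN01, hN10] at this
      simpa [hb'] using this
    have hab : c ^ 2 ≤ a * b := by
      rcases eq_or_lt_of_le hc0 with hcz | hcpos
      · rw [← hcz]; simpa using mul_nonneg ha hb
      · have hq : ∀ t : ℝ, 0 ≤ a * (t * t) + (-(2 * c)) * t + b := by
          intro t
          have h := hpsd'.dotProduct_mulVec_nonneg ![((c * t : ℝ) : ℂ), -((starRingEnd ℂ) z)]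
          rw [quad2] at h
          have hre := (Complex.nonneg_iff.mp h).1
          have hform : ((starRingEnd ℂ) (![((c * t : ℝ) : ℂ), -((starRingEnd ℂ) z)] 0) * N 0 0 * ![((c * t : ℝ) : ℂ), -((starRingEnd ℂ) z)] 0
              + (starRingEnd ℂ) (![((c * t : ℝ) : ℂ), -((starRingEnd ℂ) z)] 0) * N 0 1 * ![((c * t : ℝ) : ℂ), -((starRingEnd ℂ) z)] 1
              + (starRingEnd ℂ) (![((c * t : ℝ) : ℂ), -((starRingEnd ℂ) z)] 1) * N 1 0 * ![((c * t : ℝ) : ℂ), -((starRingEnd ℂ) z)] 0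
              + (starRingEnd ℂ) (![((c * t : ℝ) : ℂ), -((starRingEnd ℂ) z)] 1) * N 1 1 * ![((c * t : ℝ) : ℂ), -((starRingEnd ℂ) z)] 1).re
              = c ^ 2 * (a * (t * t) + (-(2 * c)) * t + b) := by
            simp [hN00, hN11, hN01, hN10, Complex.mul_re, Complex.mul_im, ha', hb', him0, him1]
            linear_combination (2 * c * t - ((ρ 1 1).re - l1)) * hsq
          rw [hform] at hre
          have hc2 : (0 : ℝ) < c ^ 2 := by positivity
          nlinarith [hre, hc2]
        have hd := discrim_le_zero hq
        rw [discrim] at hd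
        nlinarith [hd]
    have hab2 : 2 * c ≤ a + b := by
      nlinarith [sq_nonneg (a - b), hab, ha, hb, hc0, mul_nonneg ha hb]
    have : s = l0 + l1 := hs
    rw [this]
    have : l0 + l1 = 1 - (a + b) := by rw [ha', hb']; linarith
    rw [this]
    linarith
end

section
/- For a 2×2 density matrix ρ with |ρ₀₁| ≥ min{ρ₀₀, ρ₁₁} (the absolute value of the off-diagonal entry is at least one of the diagonal entries), the coherence weight satisfies C_w(ρ) = 1 - det(ρ)/min{ρ₀₀, ρ₁₁}, i.e., the maximum of λ₀ + λ₁ over nonnegative λ₀, λ₁ with ρ - λ₀|0⟩⟨0| - λ₁|1⟩⟨1| ⪰ 0 equals det(ρ)/min{ρ₀₀, ρ₁₁}. -/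
open Matrix ComplexOrder

lemma diag_nonneg' (σ : Matrix (Fin 2) (Fin 2) ℂ) (hσ : σ.PosSemidef) (i : Fin 2) :
    0 ≤ (σ i i).re := by
  have h := hσ.dotProduct_mulVec_nonneg (Pi.single i 1)
  have h2 := (Complex.le_def.mp h).1
  simpa [dotProduct, Matrix.mulVec, Fin.sum_univ_two, Pi.single_apply] using h2

lemma key_ineq (x y : ℝ) (b : ℂ) (σ : Matrix (Fin 2) (Fin 2) ℂ)
    (h00 : σ 0 0 = (x:ℂ)) (h11 : σ 1 1 = (y:ℂ)) (h01 : σ 0 1 = b)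
    (h10 : σ 1 0 = (starRingEnd ℂ) b)
    (hσ : σ.PosSemidef) (hb : 0 < Complex.normSq b) :
    Complex.normSq b ≤ x * y := by
  set B := Complex.normSq b with hB
  have hquad : ∀ s : ℝ, 0 ≤ x * (s * s) + (-(2*B)) * s + y * B := by
    intro s
    have h := hσ.dotProduct_mulVec_nonneg ![(s:ℂ), -(starRingEnd ℂ) b]
    have h2 := (Complex.le_def.mp h).1
    have hcalc : (star ![(s:ℂ), -(starRingEnd ℂ) b] ⬝ᵥ σ *ᵥ ![(s:ℂ), -(starRingEnd ℂ) b]) =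
        ((x * (s * s) + (-(2*B)) * s + y * B : ℝ) : ℂ) := by
      simp [dotProduct, Matrix.mulVec, Fin.sum_univ_two, h00, h11, h01, h10,
        Complex.mul_conj, Complex.mul_conj']
      push_cast
      ring_nf
      rw [mul_assoc ((s:ℂ)) b, Complex.mul_conj]
      push_cast
      ring
    rw [hcalc] at h2
    simpa using h2
  have hd := discrim_le_zero hquad
  rw [discrim] at hd
  nlinarith [hb]

lemma aux_psd1 (x : ℝ) (hx : 0 < x) (b : ℂ) :
    (!![(x:ℂ), b; (starRingEnd ℂ) b, ((Complex.normSq b / x : ℝ) : ℂ)]).PosSemidef := by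
  have hs0 : (0:ℝ) < Real.sqrt x := Real.sqrt_pos.mpr hx
  have hs : ((Real.sqrt x : ℝ) : ℂ) ≠ 0 := by
    simpa using hs0.ne'
  have hss : ((Real.sqrt x : ℝ) : ℂ) * ((Real.sqrt x : ℝ) : ℂ) = (x:ℂ) := by
    rw [← Complex.ofReal_mul, Real.mul_self_sqrt hx.le]
  have h := Matrix.posSemidef_conjTranspose_mul_self
    (!![((Real.sqrt x : ℝ) : ℂ), b / ((Real.sqrt x : ℝ) : ℂ)] : Matrix (Fin 1) (Fin 2) ℂ)
  convert h using 1
  ext i j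
  fin_cases i <;> fin_cases j <;>
    simp only [Matrix.mul_apply, Fin.sum_univ_one, Matrix.conjTranspose_apply, Fin.zero_eta,
      Fin.mk_one, Fin.isValue, Matrix.cons_val', Matrix.cons_val_zero, Matrix.cons_val_one,
      Matrix.head_cons, Matrix.head_fin_const, Matrix.empty_val', Matrix.cons_val_fin_one,
      Matrix.of_apply, Complex.star_def, Complex.conj_ofReal, map_div₀]
  · exact hss.symm
  · field_simp
  · field_simp
  · rw [div_mul_div_comm, hss, Complex.ofReal_div]
    congr 1
    rw [mul_comm, Complex.mul_conj]

lemma aux_psd2 (x : ℝ) (hx : 0 < x) (b : ℂ) :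
    (!![((Complex.normSq b / x : ℝ) : ℂ), b; (starRingEnd ℂ) b, (x:ℂ)]).PosSemidef := by
  have hs0 : (0:ℝ) < Real.sqrt x := Real.sqrt_pos.mpr hx
  have hs : ((Real.sqrt x : ℝ) : ℂ) ≠ 0 := by
    simpa using hs0.ne'
  have hss : ((Real.sqrt x : ℝ) : ℂ) * ((Real.sqrt x : ℝ) : ℂ) = (x:ℂ) := by
    rw [← Complex.ofReal_mul, Real.mul_self_sqrt hx.le]
  have h := Matrix.posSemidef_conjTranspose_mul_self
    (!![(starRingEnd ℂ) b / ((Real.sqrt x : ℝ) : ℂ), ((Real.sqrt x : ℝ) : ℂ)] : Matrix (Fin 1) (Fin 2) ℂ)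
  convert h using 1
  ext i j
  fin_cases i <;> fin_cases j <;>
    simp only [Matrix.mul_apply, Fin.sum_univ_one, Matrix.conjTranspose_apply, Fin.zero_eta,
      Fin.mk_one, Fin.isValue, Matrix.cons_val', Matrix.cons_val_zero, Matrix.cons_val_one,
      Matrix.head_cons, Matrix.head_fin_const, Matrix.empty_val', Matrix.cons_val_fin_one,
      Matrix.of_apply, Complex.star_def, Complex.conj_ofReal, map_div₀, RingHomCompTriple.comp_apply,
      RingHom.id_apply, Complex.conj_conj]
  · rw [div_mul_div_comm, hss, Complex.ofReal_div]
    congr 1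
    rw [Complex.mul_conj]
  · field_simp
  · field_simp
  · exact hss.symm

set_option maxHeartbeats 1000000 in
theorem stmt_1 (ρ : Matrix (Fin 2) (Fin 2) ℂ)
    (hpsd : ρ.PosSemidef) (htr : ρ.trace = 1)
    (hmin : 0 < min (ρ 0 0).re (ρ 1 1).re)
    (hoff : min (ρ 0 0).re (ρ 1 1).re ≤ ‖ρ 0 1‖) :
    IsGreatest {s : ℝ | ∃ l0 l1 : ℝ, 0 ≤ l0 ∧ 0 ≤ l1 ∧ s = l0 + l1 ∧
        (ρ - (l0 : ℂ) • Matrix.single (0 : Fin 2) 0 (1 : ℂ)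
           - (l1 : ℂ) • Matrix.single (1 : Fin 2) 1 (1 : ℂ)).PosSemidef}
      (ρ.det.re / min (ρ 0 0).re (ρ 1 1).re) := by
  have hH := hpsd.1
  set a := (ρ 0 0).re with ha'
  set c := (ρ 1 1).re with hc'
  set b := ρ 0 1 with hb'
  set B := Complex.normSq b with hB'
  have h00 : ρ 0 0 = (a:ℂ) := (hH.coe_re_apply_self 0).symm
  have h11 : ρ 1 1 = (c:ℂ) := (hH.coe_re_apply_self 1).symm
  have h10 : ρ 1 0 = (starRingEnd ℂ) b := by
    have := congrFun (congrFun hH 1) 0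
    simpa [Matrix.conjTranspose_apply] using this.symm
  have ha0 : 0 < a := lt_of_lt_of_le hmin (min_le_left _ _)
  have hc0 : 0 < c := lt_of_lt_of_le hmin (min_le_right _ _)
  have hm0 : 0 < min a c := hmin
  have hBm : min a c ^ 2 ≤ B := by
    have := Complex.sq_norm b
    nlinarith [hoff, hmin]
  have hB0 : 0 < B := lt_of_lt_of_le (by positivity) hBm
  have hdet : ρ.det.re = a * c - B := by
    rw [Matrix.det_fin_two, h10, h00, h11, Complex.mul_conj]
    simp
    rfl
  have hBac : B ≤ a * c := key_ineq a c b ρ h00 h11 rfl h10 hpsd hB0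
  constructor
  · -- membership
    rcases le_total a c with hac | hac
    · refine ⟨0, c - B/a, le_rfl, ?_, ?_, ?_⟩
      · rw [sub_nonneg, div_le_iff₀ ha0]
        nlinarith [hBac]
      · rw [hdet, min_eq_left hac]
        field_simp
        ring
      · have hEq : ρ - ((0:ℝ) : ℂ) • Matrix.single (0 : Fin 2) 0 (1 : ℂ)
            - ((c - B/a : ℝ) : ℂ) • Matrix.single (1 : Fin 2) 1 (1 : ℂ)
            = !![(a:ℂ), b; (starRingEnd ℂ) b, ((Complex.normSq b / a : ℝ) : ℂ)] := by
          ext i j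
          fin_cases i <;> fin_cases j <;>
            simp [Matrix.single, h00, h11, h10, ← hB'] <;>
            (push_cast; ring)
        rw [hEq]
        exact aux_psd1 a ha0 b
    · refine ⟨a - B/c, 0, ?_, le_rfl, ?_, ?_⟩
      · rw [sub_nonneg, div_le_iff₀ hc0]
        nlinarith [hBac]
      · rw [hdet, min_eq_right hac]
        field_simp
        ring
      · have hEq : ρ - ((a - B/c : ℝ) : ℂ) • Matrix.single (0 : Fin 2) 0 (1 : ℂ)
            - ((0:ℝ) : ℂ) • Matrix.single (1 : Fin 2) 1 (1 : ℂ)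
            = !![((Complex.normSq b / c : ℝ) : ℂ), b; (starRingEnd ℂ) b, (c:ℂ)] := by
          ext i j
          fin_cases i <;> fin_cases j <;>
            simp [Matrix.single, h00, h11, h10, ← hB'] <;>
            (push_cast; ring)
        rw [hEq]
        exact aux_psd2 c hc0 b
  · -- upper bound
    rintro s ⟨l0, l1, hl0, hl1, rfl, hσ⟩
    set σ := ρ - (l0 : ℂ) • Matrix.single (0 : Fin 2) 0 (1 : ℂ)
           - (l1 : ℂ) • Matrix.single (1 : Fin 2) 1 (1 : ℂ) with hσ'
    have hσ00 : σ 0 0 = ((a - l0 : ℝ) : ℂ) := by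
      simp [hσ', Matrix.single, h00]
    have hσ11 : σ 1 1 = ((c - l1 : ℝ) : ℂ) := by
      simp [hσ', Matrix.single, h11]
    have hσ01 : σ 0 1 = b := by
      simp [hσ', Matrix.single]
      rfl
    have hσ10 : σ 1 0 = (starRingEnd ℂ) b := by
      simp [hσ', Matrix.single, h10]
    have hx : 0 ≤ a - l0 := by
      have := diag_nonneg' σ hσ 0
      rwa [hσ00, Complex.ofReal_re] at this
    have hy : 0 ≤ c - l1 := by
      have := diag_nonneg' σ hσ 1
      rwa [hσ11, Complex.ofReal_re] at this
    have hxy : B ≤ (a - l0) * (c - l1) := key_ineq _ _ b σ hσ00 hσ11 hσ01 hσ10 hσ hB0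
    clear_value σ
    clear hσ hσ00 hσ11 hσ01 hσ10 hσ' σ hpsd hH hoff htr
    rw [hdet, le_div_iff₀ hm0]
    rcases le_total a c with hac | hac
    · rw [min_eq_left hac] at hBm ⊢
      have hxpos : 0 < a - l0 := by nlinarith [hB0, hxy, hy]
      have h1 : 0 ≤ l0 * (B - a * (a - l0)) := by
        apply mul_nonneg hl0
        nlinarith [hBm, hl0, ha0]
      nlinarith [hxy, hxpos, h1, mul_pos hxpos ha0]
    · rw [min_eq_right hac] at hBm ⊢
      have hypos : 0 < c - l1 := by nlinarith [hB0, hxy, hx]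
      have h1 : 0 ≤ l1 * (B - c * (c - l1)) := by
        apply mul_nonneg hl1
        nlinarith [hBm, hl1, hc0]
      nlinarith [hxy, hypos, h1, mul_pos hypos hc0]
end

section
/- For any qubit density matrix ρ, the coherence weight and the linear-entropy mixedness satisfy the trade-off C_w(ρ)² + M(ρ) ≤ 1, where M(ρ) = 2(1 - Tr(ρ²)). Equivalently, C_w(ρ) is at most the length of the Bloch vector of ρ. -/
open Matrix ComplexOrder

/-- The coherence weight of a density matrix: `1` minus the supremum of `∑ᵢ λᵢ`
over nonnegative `λᵢ` with `ρ - ∑ᵢ λᵢ|i⟩⟨i| ⪰ 0`. -/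
noncomputable def coherenceWeight {n : Type*} [Fintype n] [DecidableEq n]
    (ρ : Matrix n n ℂ) : ℝ :=
  1 - sSup {s : ℝ | ∃ lam : n → ℝ, (∀ i, 0 ≤ lam i) ∧ s = ∑ i, lam i ∧
      (ρ - Matrix.diagonal (fun i => (lam i : ℂ))).PosSemidef}

lemma quad_form (M : Matrix (Fin 2) (Fin 2) ℂ) (x : Fin 2 → ℂ) :
    dotProduct (star x) (M *ᵥ x) =
      (starRingEnd ℂ) (x 0) * (M 0 0 * x 0 + M 0 1 * x 1) +
      (starRingEnd ℂ) (x 1) * (M 1 0 * x 0 + M 1 1 * x 1) := by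
  simp [dotProduct, mulVec, Fin.sum_univ_two]

lemma psd_diag (M : Matrix (Fin 2) (Fin 2) ℂ) (h : M.PosSemidef) (i : Fin 2) :
    0 ≤ M i i := by
  have := h.dotProduct_mulVec_nonneg (Pi.single i 1)
  rw [quad_form] at this
  fin_cases i <;> simpa [Pi.single_apply] using this

lemma real_key {p q ac a0 a1 r : ℝ} (hp : 0 ≤ p) (hq : 0 ≤ q) (hac : 0 ≤ ac)
    (h0 : 0 ≤ a0) (h1 : 0 ≤ a1) (hd : ac ^ 2 ≤ p * q) (hr : -(ac * a1 * a0) ≤ r) :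
    0 ≤ p * a0 ^ 2 + q * a1 ^ 2 + 2 * r := by
  have hX : 0 ≤ p * a0 ^ 2 + q * a1 ^ 2 := by positivity
  have h2 : 2 * (ac * a1 * a0) ≤ p * a0 ^ 2 + q * a1 ^ 2 := by
    nlinarith [sq_nonneg (p * a0 ^ 2 - q * a1 ^ 2),
      mul_nonneg (sub_nonneg.2 hd) (sq_nonneg (a0 * a1)),
      mul_nonneg (mul_nonneg hac h1) h0]
  linarith

lemma psd2 {M : Matrix (Fin 2) (Fin 2) ℂ} {p q : ℝ} (hp : 0 ≤ p) (hq : 0 ≤ q)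
    (h00 : M 0 0 = (p : ℂ)) (h11 : M 1 1 = (q : ℂ))
    (h10 : M 1 0 = (starRingEnd ℂ) (M 0 1))
    (hdet : ‖M 0 1‖ ^ 2 ≤ p * q) : M.PosSemidef := by
  refine posSemidef_iff_dotProduct_mulVec.mpr ⟨?_, ?_⟩
  · apply IsHermitian.ext
    intro i j
    fin_cases i <;> fin_cases j <;>
      simp [h00, h11, h10, Complex.conj_ofReal]
  · intro x
    rw [quad_form, h00, h11, h10]
    set c := M 0 1 with hc
    set x0 := x 0
    set x1 := x 1
    have hexpr : (starRingEnd ℂ) x0 * ((p:ℂ) * x0 + c * x1) +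
        (starRingEnd ℂ) x1 * ((starRingEnd ℂ) c * x0 + (q:ℂ) * x1)
        = ((p * Complex.normSq x0 + q * Complex.normSq x1
            + 2 * (c * x1 * (starRingEnd ℂ) x0).re : ℝ) : ℂ) := by
      apply Complex.ext <;>
        simp [Complex.normSq_apply, Complex.mul_re, Complex.mul_im] <;> ring
    rw [hexpr, Complex.zero_le_real, ← Complex.sq_norm x0, ← Complex.sq_norm x1]
    have hr : -(‖c‖ * ‖x1‖ * ‖x0‖)
        ≤ (c * x1 * (starRingEnd ℂ) x0).re := by
      have h := Complex.abs_re_le_norm (c * x1 * (starRingEnd ℂ) x0)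
      rw [norm_mul, norm_mul, Complex.norm_conj] at h
      exact (abs_le.1 h).1
    exact real_key hp hq (norm_nonneg c) (norm_nonneg x0)
      (norm_nonneg x1) hdet hr


set_option maxHeartbeats 1000000 in
theorem stmt_2 (ρ : Matrix (Fin 2) (Fin 2) ℂ)
    (hpsd : ρ.PosSemidef) (htr : ρ.trace = 1) :
    (coherenceWeight ρ) ^ 2 + 2 * (1 - ((ρ * ρ).trace).re) ≤ 1 := by
  set c := ρ 0 1 with hc
  set d := ‖c‖ with hd
  set a := (ρ 0 0).re with ha'
  set b := (ρ 1 1).re with hb'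
  have h00c : 0 ≤ ρ 0 0 := psd_diag ρ hpsd 0
  have h11c : 0 ≤ ρ 1 1 := psd_diag ρ hpsd 1
  have ha : 0 ≤ a := by simpa using (Complex.le_def.1 h00c).1
  have hb : 0 ≤ b := by simpa using (Complex.le_def.1 h11c).1
  have h00 : ρ 0 0 = (a : ℂ) := by
    have him : (ρ 0 0).im = 0 := by simpa using ((Complex.le_def.1 h00c).2).symm
    apply Complex.ext <;> simp [him, ha']
  have h11 : ρ 1 1 = (b : ℂ) := by
    have him : (ρ 1 1).im = 0 := by simpa using ((Complex.le_def.1 h11c).2).symm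
    apply Complex.ext <;> simp [him, hb']
  have h10 : ρ 1 0 = (starRingEnd ℂ) c := by
    rw [← hpsd.1.apply 1 0]; rfl
  have htrab : a + b = 1 := by
    have h := congrArg Complex.re htr
    rw [Matrix.trace_fin_two] at h
    simpa using h
  have hd0 : 0 ≤ d := norm_nonneg c
  have hdet : d ^ 2 ≤ a * b := by
    have hb2 := hpsd.dotProduct_mulVec_nonneg ![(b : ℂ), -(starRingEnd ℂ) c]
    have ha2 := hpsd.dotProduct_mulVec_nonneg ![-c, (a : ℂ)]
    rw [quad_form] at hb2 ha2
    simp only [Matrix.cons_val_zero, Matrix.cons_val_one, Matrix.head_cons] at hb2 ha2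
    rw [h00, h11, h10] at hb2 ha2
    have eb : (starRingEnd ℂ) (b : ℂ) * ((a:ℂ) * b + c * (-(starRingEnd ℂ) c)) +
        (starRingEnd ℂ) (-(starRingEnd ℂ) c) * ((starRingEnd ℂ) c * b + (b:ℂ) * (-(starRingEnd ℂ) c))
        = ((b * (a * b - d ^ 2) : ℝ) : ℂ) := by
      apply Complex.ext <;>
        simp [hd, Complex.sq_norm, Complex.normSq_apply, Complex.mul_re, Complex.mul_im] <;> ring
    have ea : (starRingEnd ℂ) (-c) * ((a:ℂ) * (-c) + c * a) +
        (starRingEnd ℂ) (a : ℂ) * ((starRingEnd ℂ) c * (-c) + (b:ℂ) * a)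
        = ((a * (a * b - d ^ 2) : ℝ) : ℂ) := by
      apply Complex.ext <;>
        simp [hd, Complex.sq_norm, Complex.normSq_apply, Complex.mul_re, Complex.mul_im] <;> ring
    rw [eb, Complex.zero_le_real] at hb2
    rw [ea, Complex.zero_le_real] at ha2
    nlinarith [hb2, ha2, htrab]
  have htrace2 : ((ρ * ρ).trace).re = a ^ 2 + b ^ 2 + 2 * d ^ 2 := by
    have e : (ρ * ρ).trace = ((a ^ 2 + b ^ 2 + 2 * d ^ 2 : ℝ) : ℂ) := by
      rw [Matrix.trace_fin_two, Matrix.mul_apply, Matrix.mul_apply,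
        Fin.sum_univ_two, Fin.sum_univ_two, h00, h11, h10]
      apply Complex.ext <;>
        simp [hd, Complex.sq_norm, Complex.normSq_apply, Complex.mul_re, Complex.mul_im,
          ← Complex.ofReal_pow] <;> ring
    rw [e, Complex.ofReal_re]
  rw [coherenceWeight]
  set S : Set ℝ := {s : ℝ | ∃ lam : Fin 2 → ℝ, (∀ i, 0 ≤ lam i) ∧ s = ∑ i, lam i ∧
      (ρ - Matrix.diagonal (fun i => (lam i : ℂ))).PosSemidef} with hS
  have feas : ∀ l0 l1 : ℝ, 0 ≤ l0 → 0 ≤ l1 → l0 ≤ a → l1 ≤ b →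
      d ^ 2 ≤ (a - l0) * (b - l1) → (l0 + l1) ∈ S := by
    intro l0 l1 hl0 hl1 hla hlb hle
    refine ⟨![l0, l1], ?_, by simp [Fin.sum_univ_two], ?_⟩
    · intro i; fin_cases i <;> simpa
    · have e00 : (ρ - Matrix.diagonal (fun i => ((![l0, l1] i : ℝ) : ℂ))) 0 0
          = ((a - l0 : ℝ) : ℂ) := by
        simp [Matrix.sub_apply, Matrix.diagonal_apply_eq, h00]
      have e11 : (ρ - Matrix.diagonal (fun i => ((![l0, l1] i : ℝ) : ℂ))) 1 1
          = ((b - l1 : ℝ) : ℂ) := by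
        simp [Matrix.sub_apply, Matrix.diagonal_apply_eq, h11]
      have e01 : (ρ - Matrix.diagonal (fun i => ((![l0, l1] i : ℝ) : ℂ))) 0 1 = c := by
        simp [Matrix.sub_apply, Matrix.diagonal_apply, hc]
      have e10 : (ρ - Matrix.diagonal (fun i => ((![l0, l1] i : ℝ) : ℂ))) 1 0
          = (starRingEnd ℂ) c := by
        simp [Matrix.sub_apply, Matrix.diagonal_apply, h10]
      refine psd2 (sub_nonneg.2 hla) (sub_nonneg.2 hlb) e00 e11 ?_ ?_
      · rw [e10, e01]
      · rw [e01, ← hd]; exact hle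
  have hbdd : ∀ s ∈ S, s ≤ 1 := by
    rintro s ⟨lam, hnn, rfl, hP⟩
    have e0 := psd_diag _ hP 0
    have e1 := psd_diag _ hP 1
    rw [show (ρ - Matrix.diagonal (fun i => ((lam i : ℝ) : ℂ))) 0 0 = ((a - lam 0 : ℝ) : ℂ) by
      simp [Matrix.sub_apply, Matrix.diagonal_apply_eq, h00], Complex.zero_le_real] at e0
    rw [show (ρ - Matrix.diagonal (fun i => ((lam i : ℝ) : ℂ))) 1 1 = ((b - lam 1 : ℝ) : ℂ) by
      simp [Matrix.sub_apply, Matrix.diagonal_apply_eq, h11], Complex.zero_le_real] at e1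
    rw [Fin.sum_univ_two]
    linarith
  obtain ⟨s0, hs0S, hs0⟩ : ∃ s0 ∈ S, (1 - s0) ^ 2 ≤ (a - b) ^ 2 + 4 * d ^ 2 := by
    rcases le_or_gt d a with hda | hda
    · rcases le_or_gt d b with hdb | hdb
      · refine ⟨(a - d) + (b - d), feas _ _ (by linarith) (by linarith)
          (by linarith) (by linarith) (le_of_eq (by ring)), by nlinarith [sq_nonneg (a - b)]⟩
      · have hdpos : 0 < d := lt_of_le_of_lt hb hdb
        have hb0 : 0 < b := by nlinarith
        have hl0 : 0 ≤ a - d ^ 2 / b := by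
          rw [sub_nonneg, div_le_iff₀ hb0]; nlinarith
        refine ⟨(a - d ^ 2 / b) + 0, feas _ _ hl0 le_rfl (sub_le_self a (by positivity)) hb ?_, ?_⟩
        · have : (a - (a - d ^ 2 / b)) * (b - 0) = d ^ 2 := by field_simp; ring
          rw [this]
        · have haa : a = 1 - b := by linarith
          have hb2d : b ^ 2 ≤ d ^ 2 := by nlinarith
          have h4 : d ^ 2 - b ^ 2 ≤ (1 - 2 * b) * b := by nlinarith
          have h6 : (d ^ 2 - b ^ 2) ^ 2 ≤ ((1 - 2 * b) * b) ^ 2 :=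
            pow_le_pow_left₀ (by linarith) h4 2
          have e : 1 - (a - d ^ 2 / b + 0) = (b ^ 2 + d ^ 2) / b := by
            rw [haa]; field_simp; ring
          rw [e, div_pow, div_le_iff₀ (by positivity), haa]
          nlinarith
    · have hdpos : 0 < d := lt_of_le_of_lt ha hda
      have ha0 : 0 < a := by nlinarith
      have hl1 : 0 ≤ b - d ^ 2 / a := by
        rw [sub_nonneg, div_le_iff₀ ha0]; nlinarith
      refine ⟨0 + (b - d ^ 2 / a), feas _ _ le_rfl hl1 ha (sub_le_self b (by positivity)) ?_, ?_⟩
      · have : (a - 0) * (b - (b - d ^ 2 / a)) = d ^ 2 := by field_simp; ring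
        rw [this]
      · have hbb : b = 1 - a := by linarith
        have ha2d : a ^ 2 ≤ d ^ 2 := by nlinarith
        have h4 : d ^ 2 - a ^ 2 ≤ (1 - 2 * a) * a := by nlinarith
        have h6 : (d ^ 2 - a ^ 2) ^ 2 ≤ ((1 - 2 * a) * a) ^ 2 :=
          pow_le_pow_left₀ (by linarith) h4 2
        have e : 1 - (0 + (b - d ^ 2 / a)) = (a ^ 2 + d ^ 2) / a := by
          rw [hbb]; field_simp; ring
        rw [e, div_pow, div_le_iff₀ (by positivity), hbb]
        nlinarith
  have hne : S.Nonempty := ⟨s0, hs0S⟩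
  have hba : BddAbove S := ⟨1, fun s hs => hbdd s hs⟩
  have hsup_le : sSup S ≤ 1 := csSup_le hne hbdd
  have hs0_le : s0 ≤ sSup S := le_csSup hba hs0S
  have hs0_le1 : s0 ≤ 1 := hbdd s0 hs0S
  have hCsq : (1 - sSup S) ^ 2 ≤ (1 - s0) ^ 2 :=
    pow_le_pow_left₀ (by linarith) (by linarith) 2
  have hid : (a - b) ^ 2 = 2 * (a ^ 2 + b ^ 2) - 1 := by
    linear_combination (-(a + b) - 1) * htrab
  rw [htrace2]
  nlinarith [hCsq, hs0]
end

section
/- For any qubit density matrix ρ, the coherence weight is at least the l₁-norm of coherence: C_w(ρ) ≥ C_{l₁}(ρ) = 2|ρ₀₁|. -/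
open Matrix ComplexOrder

theorem stmt_3 (ρ : Matrix (Fin 2) (Fin 2) ℂ)
    (hpsd : ρ.PosSemidef) (htr : ρ.trace = 1) :
    2 * ‖ρ 0 1‖ ≤ coherenceWeight ρ := by
  have key : ∀ s ∈ {s : ℝ | ∃ lam : Fin 2 → ℝ, (∀ i, 0 ≤ lam i) ∧ s = ∑ i, lam i ∧
      (ρ - Matrix.diagonal (fun i => (lam i : ℂ))).PosSemidef},
      s ≤ 1 - 2 * ‖ρ 0 1‖ := by
    rintro s ⟨lam, hnn, rfl, hM⟩
    set M := ρ - Matrix.diagonal (fun i => (lam i : ℂ)) with hMdef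
    have hdet : (0:ℂ) ≤ M.det := by
      rw [hM.1.det_eq_prod_eigenvalues, ← RCLike.ofReal_prod]
      exact RCLike.ofReal_nonneg.mpr (Finset.prod_nonneg fun (i : Fin 2) _ => hM.eigenvalues_nonneg i)
    have h01 : M 0 1 = ρ 0 1 := by
      simp [hMdef, Matrix.sub_apply, Matrix.diagonal_apply_ne]
    have h10 : M 1 0 = (starRingEnd ℂ) (ρ 0 1) := by
      rw [← h01]; exact (star_eq_iff_star_eq.mp (hM.1.apply 0 1)).symm
    have hA : (0:ℂ) ≤ M 0 0 := by
      exact hM.diag_nonneg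
    have hB : (0:ℂ) ≤ M 1 1 := by
      exact hM.diag_nonneg
    set a := (M 0 0).re with ha
    set b := (M 1 1).re with hb
    have hA' : M 0 0 = (a : ℂ) := by
      have := (Complex.nonneg_iff.mp hA).2
      exact Complex.ext rfl (by simpa using this.symm)
    have hB' : M 1 1 = (b : ℂ) := by
      have := (Complex.nonneg_iff.mp hB).2
      exact Complex.ext rfl (by simpa using this.symm)
    have hA0 : 0 ≤ a := (Complex.nonneg_iff.mp hA).1
    have hB0 : 0 ≤ b := (Complex.nonneg_iff.mp hB).1
    have hdet2 : M.det = ((a * b - ‖ρ 0 1‖ ^ 2 : ℝ) : ℂ) := by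
      rw [Matrix.det_fin_two, hA', hB', h01, h10, Complex.mul_conj]
      push_cast [Complex.sq_norm]
      ring
    rw [hdet2, Complex.zero_le_real] at hdet
    have habs : 2 * ‖ρ 0 1‖ ≤ a + b := by
      nlinarith [norm_nonneg (ρ 0 1), sq_nonneg (a - b),
        sq_nonneg (a + b - 2 * ‖ρ 0 1‖)]
    have ha' : a = (ρ 0 0).re - lam 0 := by
      rw [ha, hMdef]; simp [Matrix.sub_apply]
    have hb' : b = (ρ 1 1).re - lam 1 := by
      rw [hb, hMdef]; simp [Matrix.sub_apply]
    have htr' : (ρ 0 0).re + (ρ 1 1).re = 1 := by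
      have := congrArg Complex.re htr
      rw [Matrix.trace_fin_two] at this
      simpa using this
    rw [Fin.sum_univ_two]
    rw [ha', hb'] at habs
    linarith
  have h0 : (0:ℝ) ≤ 1 - 2 * ‖ρ 0 1‖ := by
    refine key 0 ⟨fun _ => 0, fun _ => le_refl 0, by simp, ?_⟩
    simpa using hpsd
  rw [coherenceWeight]
  have := Real.sSup_le key h0
  linarith
end

section
/- Let a = √(u₁² + u₂²) and consider f(u₃) = 1 - (1 - u₁² - u₂² - u₃²)/(2(1 - u₃)) - a for u₃ ∈ [1 - a, √(1 - a²)] with 0 < a < 1 and u₃ < 1. Then f is convex on this interval, f(1-a) = 0, f'(1-a) = 0, and consequently f(u₃) ≥ 0 on the whole interval. -/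
theorem stmt_4 (u1 u2 : ℝ) (a : ℝ) (ha : a = Real.sqrt (u1 ^ 2 + u2 ^ 2))
    (ha0 : 0 < a) (ha1 : a < 1)
    (f : ℝ → ℝ)
    (hf : f = fun u3 => 1 - (1 - u1 ^ 2 - u2 ^ 2 - u3 ^ 2) / (2 * (1 - u3)) - a) :
    ConvexOn ℝ (Set.Icc (1 - a) (Real.sqrt (1 - a ^ 2))) f ∧
    f (1 - a) = 0 ∧
    deriv f (1 - a) = 0 ∧
    ∀ u3 ∈ Set.Icc (1 - a) (Real.sqrt (1 - a ^ 2)), 0 ≤ f u3 := by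
  have hu : u1 ^ 2 + u2 ^ 2 = a ^ 2 := by
    rw [ha, Real.sq_sqrt (by positivity)]
  have hs1 : Real.sqrt (1 - a ^ 2) < 1 := by
    nlinarith [Real.sq_sqrt (show (0:ℝ) ≤ 1 - a ^ 2 by nlinarith),
      Real.sqrt_nonneg (1 - a ^ 2)]
  have hsub : Set.Icc (1 - a) (Real.sqrt (1 - a ^ 2)) ⊆ Set.Iio 1 :=
    fun x hx => lt_of_le_of_lt hx.2 hs1
  -- first derivative
  have hd : ∀ x ∈ Set.Iio (1:ℝ), HasDerivAt f (-(1/2) + a ^ 2 / (2 * (1 - x) ^ 2)) x := by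
    intro x hx
    have hx1 : (1:ℝ) - x ≠ 0 := by simp only [Set.mem_Iio] at hx; intro h; linarith
    have hN : HasDerivAt (fun u3 : ℝ => 1 - u1 ^ 2 - u2 ^ 2 - u3 ^ 2) (0 - 2 * x) x := by
      exact ((hasDerivAt_const x (1 - u1 ^ 2 - u2 ^ 2)).sub (hasDerivAt_pow 2 x)).congr_deriv (by norm_num)
    have hD : HasDerivAt (fun u3 : ℝ => 2 * (1 - u3)) (2 * (0 - 1)) x :=
      ((hasDerivAt_const x (1:ℝ)).sub (hasDerivAt_id x)).const_mul 2
    have hD0 : (2:ℝ) * (1 - x) ≠ 0 := by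
      intro h; apply hx1; linarith [mul_eq_zero.mp h]
    have hQ := hN.div hD hD0
    have := ((hasDerivAt_const x (1:ℝ)).sub hQ).sub_const a
    rw [hf]
    have h : (1:ℝ) - u1 ^ 2 - u2 ^ 2 = 1 - a ^ 2 := by linarith
    refine this.congr_deriv ?_
    rw [h]
    field_simp
    ring
  -- second derivative
  have hd2 : ∀ x ∈ Set.Iio (1:ℝ),
      HasDerivAt (fun x => -(1/2) + a ^ 2 / (2 * (1 - x) ^ 2)) (a ^ 2 / (1 - x) ^ 3) x := by
    intro x hx
    have hx1 : (1:ℝ) - x ≠ 0 := by simp only [Set.mem_Iio] at hx; intro h; linarith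
    have hD : HasDerivAt (fun u3 : ℝ => 2 * (1 - u3) ^ 2)
        (2 * ((2 : ℕ) * (1 - x) ^ 1 * (0 - 1))) x :=
      ((((hasDerivAt_const x (1:ℝ)).sub (hasDerivAt_id x)).pow 2)).const_mul 2
    have hD0 : (2:ℝ) * (1 - x) ^ 2 ≠ 0 := by positivity
    have := (hasDerivAt_const x (a ^ 2)).div hD hD0
    have := (hasDerivAt_const x (-(1/2):ℝ)).add this
    refine this.congr_deriv ?_
    field_simp
    ring
  have hint : interior (Set.Icc (1 - a) (Real.sqrt (1 - a ^ 2)))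
      ⊆ Set.Iio 1 := interior_subset.trans hsub
  constructor
  · refine convexOn_of_hasDerivWithinAt2_nonneg (convex_Icc _ _) ?_
      (f' := fun x => -(1/2) + a ^ 2 / (2 * (1 - x) ^ 2))
      (f'' := fun x => a ^ 2 / (1 - x) ^ 3) ?_ ?_ ?_
    · intro x hx
      exact (hd x (hsub hx)).continuousAt.continuousWithinAt
    · intro x hx
      exact (hd x (hint hx)).hasDerivWithinAt
    · intro x hx
      exact (hd2 x (hint hx)).hasDerivWithinAt
    · intro x hx
      have : x < 1 := hint hx
      have : (0:ℝ) < 1 - x := by linarith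
      positivity
  refine ⟨?_, ?_, ?_⟩
  · rw [hf]
    have h1a : (1:ℝ) - (1 - a) ≠ 0 := by intro h; linarith
    field_simp
    nlinarith [hu]
  · have h1 : (1:ℝ) - a ∈ Set.Iio (1:ℝ) := by simp only [Set.mem_Iio]; linarith
    have := (hd _ h1).deriv
    rw [this]
    have : (1:ℝ) - (1 - a) = a := by ring
    rw [this]
    field_simp
    ring
  · intro u3 hu3
    have hx1 : u3 < 1 := hsub hu3
    have h1x : (0:ℝ) < 1 - u3 := by linarith
    have key : f u3 = (1 - u3 - a) ^ 2 / (2 * (1 - u3)) := by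
      rw [hf]
      field_simp
      nlinarith [hu]
    rw [key]; positivity
end

section
/- Let ρ be a positive definite d×d Hermitian matrix and let |ψ₁⟩, |ψ₂⟩ be unit vectors with ⟨ψ₁|ρ⁻¹|ψ₂⟩ = 0. Then ρ - Λ₁|ψ₁⟩⟨ψ₁| - Λ₂|ψ₂⟩⟨ψ₂| is positive semidefinite for Λᵢ = ⟨ψᵢ|ρ⁻¹|ψᵢ⟩⁻¹, i = 1,2. -/
open Matrix ComplexOrder

theorem stmt_8 (d : ℕ) (ρ : Matrix (Fin d) (Fin d) ℂ) (hρ : ρ.PosDef)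
    (ψ1 ψ2 : Fin d → ℂ) (hψ1 : star ψ1 ⬝ᵥ ψ1 = 1) (hψ2 : star ψ2 ⬝ᵥ ψ2 = 1)
    (horth : star ψ1 ⬝ᵥ ρ⁻¹ *ᵥ ψ2 = 0) :
    (ρ - (((star ψ1 ⬝ᵥ ρ⁻¹ *ᵥ ψ1).re)⁻¹ : ℂ) • Matrix.vecMulVec ψ1 (star ψ1)
       - (((star ψ2 ⬝ᵥ ρ⁻¹ *ᵥ ψ2).re)⁻¹ : ℂ) • Matrix.vecMulVec ψ2 (star ψ2)).PosSemidef := by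
  classical
  set A := ρ⁻¹ with hAdef
  have hA : A.PosDef := hρ.inv
  have hAH : A.IsHermitian := hA.isHermitian
  have hsym : ∀ v w : Fin d → ℂ, star v ⬝ᵥ A *ᵥ w = star (star w ⬝ᵥ A *ᵥ v) := fun v w => by
    rw [star_dotProduct, star_mulVec, ← dotProduct_mulVec, hAH.eq]
  have hψ1ne : ψ1 ≠ 0 := by rintro rfl; simp at hψ1
  have hψ2ne : ψ2 ≠ 0 := by rintro rfl; simp at hψ2
  have hn1pos : 0 < star ψ1 ⬝ᵥ A *ᵥ ψ1 := hA.dotProduct_mulVec_pos hψ1ne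
  have hn2pos : 0 < star ψ2 ⬝ᵥ A *ᵥ ψ2 := hA.dotProduct_mulVec_pos hψ2ne
  set n1 : ℂ := star ψ1 ⬝ᵥ A *ᵥ ψ1 with hn1def
  set n2 : ℂ := star ψ2 ⬝ᵥ A *ᵥ ψ2 with hn2def
  have hn1re : 0 < n1.re := (Complex.lt_def.mp hn1pos).1
  have hn1im : n1.im = 0 := ((Complex.lt_def.mp hn1pos).2).symm
  have hn2re : 0 < n2.re := (Complex.lt_def.mp hn2pos).1
  have hn2im : n2.im = 0 := ((Complex.lt_def.mp hn2pos).2).symm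
  have hn1c : (n1.re : ℂ) = n1 := Complex.ext rfl (by simp [hn1im])
  have hn2c : (n2.re : ℂ) = n2 := Complex.ext rfl (by simp [hn2im])
  have hn1ne : n1 ≠ 0 := ne_of_gt hn1pos
  have hn2ne : n2 ≠ 0 := ne_of_gt hn2pos
  have horth' : star ψ2 ⬝ᵥ A *ᵥ ψ1 = 0 := by rw [hsym, horth, star_zero]
  -- Hermitian part
  have hP : ∀ ψ : Fin d → ℂ, (vecMulVec ψ (star ψ)).IsHermitian := by
    intro ψ
    ext i j
    simp [conjTranspose_apply, vecMulVec_apply, mul_comm]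
  have hHerm : (ρ - ((n1.re)⁻¹ : ℂ) • vecMulVec ψ1 (star ψ1)
      - ((n2.re)⁻¹ : ℂ) • vecMulVec ψ2 (star ψ2)).IsHermitian := by
    have hsmul : ∀ (r : ℝ) (P : Matrix (Fin d) (Fin d) ℂ), P.IsHermitian →
        (((r : ℂ))⁻¹ • P).IsHermitian := by
      intro r P hPh
      have hc : star (((r : ℂ))⁻¹) = ((r : ℂ))⁻¹ := by simp
      show (((r:ℂ))⁻¹ • P)ᴴ = ((r:ℂ))⁻¹ • P
      rw [conjTranspose_smul, hPh.eq, hc]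
    exact (hρ.isHermitian.sub (hsmul _ _ (hP ψ1))).sub (hsmul _ _ (hP ψ2))
  refine .of_dotProduct_mulVec_nonneg hHerm fun x => ?_
  -- setup
  set w : Fin d → ℂ := ρ *ᵥ x with hwdef
  have hinv : A * ρ = 1 := Matrix.nonsing_inv_mul ρ ((Matrix.isUnit_iff_isUnit_det ρ).mp hρ.isUnit)
  have hx : A *ᵥ w = x := by
    rw [hwdef, mulVec_mulVec, hinv, one_mulVec]
  set a1 : ℂ := star ψ1 ⬝ᵥ A *ᵥ w with ha1def
  set a2 : ℂ := star ψ2 ⬝ᵥ A *ᵥ w with ha2def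
  have hψ1x : star ψ1 ⬝ᵥ x = a1 := by rw [← hx]
  have hψ2x : star ψ2 ⬝ᵥ x = a2 := by rw [← hx]
  have hxρx : star x ⬝ᵥ ρ *ᵥ x = star w ⬝ᵥ A *ᵥ w := by
    calc star x ⬝ᵥ ρ *ᵥ x = star x ⬝ᵥ w := by rw [hwdef]
      _ = star (A *ᵥ w) ⬝ᵥ w := by rw [hx]
      _ = star w ᵥ* Aᴴ ⬝ᵥ w := by rw [star_mulVec]
      _ = star w ⬝ᵥ Aᴴ *ᵥ w := (dotProduct_mulVec (star w) Aᴴ w).symm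
      _ = star w ⬝ᵥ A *ᵥ w := by rw [hAH.eq]
  have hPx : ∀ ψ v : Fin d → ℂ, vecMulVec ψ (star ψ) *ᵥ v = (star ψ ⬝ᵥ v) • ψ := by
    intro ψ v
    ext i
    simp [vecMulVec_apply, mulVec, dotProduct, Finset.mul_sum, mul_comm, mul_assoc,
      mul_left_comm]
  have hxψ1 : star x ⬝ᵥ ψ1 = star a1 := by rw [← hψ1x, star_dotProduct]
  have hxψ2 : star x ⬝ᵥ ψ2 = star a2 := by rw [← hψ2x, star_dotProduct]
  have hform : star x ⬝ᵥ (ρ - ((n1.re : ℂ))⁻¹ • vecMulVec ψ1 (star ψ1)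
        - ((n2.re : ℂ))⁻¹ • vecMulVec ψ2 (star ψ2)) *ᵥ x
      = star w ⬝ᵥ A *ᵥ w - ((n1.re : ℂ))⁻¹ * (a1 * star a1)
        - ((n2.re : ℂ))⁻¹ * (a2 * star a2) := by
    simp only [sub_mulVec, smul_mulVec, hPx, dotProduct_sub, dotProduct_smul,
      smul_eq_mul, hψ1x, hψ2x, hxρx, hxψ1, hxψ2]
    try ring
  set u : Fin d → ℂ := w - (a1 / n1) • ψ1 - (a2 / n2) • ψ2 with hudef
  have h0 : 0 ≤ star u ⬝ᵥ A *ᵥ u := hA.posSemidef.dotProduct_mulVec_nonneg u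
  have hsn1 : star n1 = n1 := by rw [← hn1c]; exact Complex.conj_ofReal _
  have hsn2 : star n2 = n2 := by rw [← hn2c]; exact Complex.conj_ofReal _
  have hwψ1 : star w ⬝ᵥ A *ᵥ ψ1 = star a1 := by rw [hsym, ← ha1def]
  have hwψ2 : star w ⬝ᵥ A *ᵥ ψ2 = star a2 := by rw [hsym, ← ha2def]
  have horth2 : star ψ1 ⬝ᵥ A *ᵥ ψ2 = 0 := horth
  have hexp : star u ⬝ᵥ A *ᵥ u
      = star w ⬝ᵥ A *ᵥ w - ((n1.re : ℂ))⁻¹ * (a1 * star a1)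
        - ((n2.re : ℂ))⁻¹ * (a2 * star a2) := by
    simp only [hudef, star_sub, star_smul, mulVec_sub, mulVec_smul, sub_dotProduct,
      dotProduct_sub, smul_dotProduct, dotProduct_smul, smul_eq_mul,
      ← ha1def, ← ha2def, ← hn1def, ← hn2def, hwψ1, hwψ2, horth2, horth',
      star_div₀, hsn1, hsn2, mul_zero, sub_zero]
    rw [← hn1c, ← hn2c] at *
    simp only [Complex.ofReal_re]
    field_simp
    ring
  rw [hform, ← hexp]
  exact h0
end

section
/- Let ρ be a positive definite d×d Hermitian matrix, |ψ₁⟩, |ψ₂⟩ unit vectors with a := ⟨ψ₁|ρ⁻¹|ψ₁⟩, b := ⟨ψ₂|ρ⁻¹|ψ₂⟩, c := |⟨ψ₁|ρ⁻¹|ψ₂⟩|, and suppose a, b ≥ c > 0. Let D = ab - c² and Λ₁ = (b - c)/D, Λ₂ = (a - c)/D. Then ρ - Λ₁|ψ₁⟩⟨ψ₁| - Λ₂|ψ₂⟩⟨ψ₂| is positive semidefinite. -/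
open Matrix ComplexOrder

lemma vecMulVec_mulVec' {d : ℕ} (w v x : Fin d → ℂ) :
    vecMulVec w v *ᵥ x = (v ⬝ᵥ x) • w := by
  ext i
  simp only [mulVec, dotProduct, vecMulVec_apply, Pi.smul_apply, smul_eq_mul, Finset.sum_mul]
  exact Finset.sum_congr rfl fun j _ => by ring

theorem stmt_9 (d : ℕ) (ρ : Matrix (Fin d) (Fin d) ℂ) (hρ : ρ.PosDef)
    (ψ1 ψ2 : Fin d → ℂ) (hψ1 : star ψ1 ⬝ᵥ ψ1 = 1) (hψ2 : star ψ2 ⬝ᵥ ψ2 = 1)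
    (a b c D : ℝ)
    (ha : a = (star ψ1 ⬝ᵥ ρ⁻¹ *ᵥ ψ1).re)
    (hb : b = (star ψ2 ⬝ᵥ ρ⁻¹ *ᵥ ψ2).re)
    (hc : c = ‖star ψ1 ⬝ᵥ ρ⁻¹ *ᵥ ψ2‖)
    (hc0 : 0 < c) (hac : c ≤ a) (hbc : c ≤ b)
    (hD : D = a * b - c ^ 2) (hD0 : 0 < D) :
    (ρ - (((b - c) / D : ℝ) : ℂ) • Matrix.vecMulVec ψ1 (star ψ1)
       - (((a - c) / D : ℝ) : ℂ) • Matrix.vecMulVec ψ2 (star ψ2)).PosSemidef := by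
  have hdet : IsUnit ρ.det := (Matrix.isUnit_iff_isUnit_det ρ).1 hρ.isUnit
  have hinv : ρ⁻¹ᴴ = ρ⁻¹ := by
    rw [Matrix.conjTranspose_nonsing_inv, hρ.isHermitian.eq]
  -- Hermitian part
  have hP1 : ((((b - c) / D : ℝ) : ℂ) • Matrix.vecMulVec ψ1 (star ψ1)).IsHermitian := by
    rw [Matrix.IsHermitian, conjTranspose_smul]
    congr 1
    · exact Complex.conj_ofReal _
    · ext i j
      simp only [conjTranspose_apply, vecMulVec_apply, Pi.star_apply, star_mul', star_star]
      ring
  have hP2 : ((((a - c) / D : ℝ) : ℂ) • Matrix.vecMulVec ψ2 (star ψ2)).IsHermitian := by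
    rw [Matrix.IsHermitian, conjTranspose_smul]
    congr 1
    · exact Complex.conj_ofReal _
    · ext i j
      simp only [conjTranspose_apply, vecMulVec_apply, Pi.star_apply, star_mul', star_star]
      ring
  refine Matrix.PosSemidef.of_dotProduct_mulVec_nonneg ((hρ.isHermitian.sub hP1).sub hP2) fun x => ?_
  -- notation
  set y1 : Fin d → ℂ := ρ⁻¹ *ᵥ ψ1 with hy1
  set y2 : Fin d → ℂ := ρ⁻¹ *ᵥ ψ2 with hy2
  set u1 : ℂ := star ψ1 ⬝ᵥ x with hu1
  set u2 : ℂ := star ψ2 ⬝ᵥ x with hu2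
  set g : ℂ := star ψ1 ⬝ᵥ ρ⁻¹ *ᵥ ψ2 with hg
  set s : ℂ := star x ⬝ᵥ ρ *ᵥ x with hs
  -- key rewriting facts
  have key : ∀ v w : Fin d → ℂ, star (ρ⁻¹ *ᵥ v) ⬝ᵥ ρ *ᵥ w = star v ⬝ᵥ w := by
    intro v w
    rw [star_mulVec, hinv, dotProduct_mulVec, vecMul_vecMul, Matrix.nonsing_inv_mul ρ hdet,
      vecMul_one]
  have key2 : ∀ v : Fin d → ℂ, ρ *ᵥ (ρ⁻¹ *ᵥ v) = v := by
    intro v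
    rw [mulVec_mulVec, Matrix.mul_nonsing_inv ρ hdet, one_mulVec]
  have hsx : 0 ≤ s := hρ.posSemidef.dotProduct_mulVec_nonneg x
  have hsim : s.im = 0 := (Complex.le_def.1 hsx).2.symm
  have h11C : star y1 ⬝ᵥ ρ *ᵥ y1 = (a : ℂ) := by
    rw [hy1, key]
    have h0 : 0 ≤ star ψ1 ⬝ᵥ ρ⁻¹ *ᵥ ψ1 := hρ.inv.posSemidef.dotProduct_mulVec_nonneg ψ1
    have him := (Complex.le_def.1 h0).2
    exact Complex.ext (by rw [ha, Complex.ofReal_re])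
      (by rw [← him, Complex.ofReal_im]; exact Complex.zero_im)
  have h22C : star y2 ⬝ᵥ ρ *ᵥ y2 = (b : ℂ) := by
    rw [hy2, key]
    have h0 : 0 ≤ star ψ2 ⬝ᵥ ρ⁻¹ *ᵥ ψ2 := hρ.inv.posSemidef.dotProduct_mulVec_nonneg ψ2
    have him := (Complex.le_def.1 h0).2
    exact Complex.ext (by rw [hb, Complex.ofReal_re])
      (by rw [← him, Complex.ofReal_im]; exact Complex.zero_im)
  have h12C : star y1 ⬝ᵥ ρ *ᵥ y2 = g := by rw [hy1, key, hg, hy2]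
  have h21C : star y2 ⬝ᵥ ρ *ᵥ y1 = (starRingEnd ℂ) g := by
    rw [hy2, key, hg]
    rw [show star ψ2 ⬝ᵥ y1 = star (star y1 ⬝ᵥ ψ2) by rw [star_dotProduct]]
    rw [hy1, star_mulVec, hinv, ← dotProduct_mulVec]
    rfl
  have h1x : star y1 ⬝ᵥ ρ *ᵥ x = u1 := by rw [hy1, key, hu1]
  have h2x : star y2 ⬝ᵥ ρ *ᵥ x = u2 := by rw [hy2, key, hu2]
  have hx1 : star x ⬝ᵥ ρ *ᵥ y1 = (starRingEnd ℂ) u1 := by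
    rw [hy1, key2, hu1, show star ψ1 ⬝ᵥ x = star (star x ⬝ᵥ ψ1) by rw [star_dotProduct]]
    exact (star_star _).symm
  have hx2 : star x ⬝ᵥ ρ *ᵥ y2 = (starRingEnd ℂ) u2 := by
    rw [hy2, key2, hu2, show star ψ2 ⬝ᵥ x = star (star x ⬝ᵥ ψ2) by rw [star_dotProduct]]
    exact (star_star _).symm
  -- the auxiliary vector
  set α : ℂ := (b : ℂ) * u1 - g * u2 with hα
  set β : ℂ := (a : ℂ) * u2 - (starRingEnd ℂ) g * u1 with hβ
  set z : Fin d → ℂ := (D : ℂ) • x - α • y1 - β • y2 with hz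
  have hgg : g * (starRingEnd ℂ) g = (a : ℂ) * (b : ℂ) - (D : ℂ) := by
    rw [Complex.mul_conj, show Complex.normSq g = a * b - D by
      rw [← Complex.sq_norm, ← hc]; linarith [hD]]
    push_cast
    ring
  have hE : star z ⬝ᵥ ρ *ᵥ z =
      (D : ℂ) ^ 2 * s
        - (D : ℂ) * ((b : ℂ) * (u1 * (starRingEnd ℂ) u1) + (a : ℂ) * (u2 * (starRingEnd ℂ) u2))
        + (D : ℂ) * (((starRingEnd ℂ) g * u1 * (starRingEnd ℂ) u2)
            + (starRingEnd ℂ) ((starRingEnd ℂ) g * u1 * (starRingEnd ℂ) u2)) := by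
    rw [hz]
    simp only [star_sub, star_smul, mulVec_sub, mulVec_smul, sub_dotProduct, dotProduct_sub,
      smul_dotProduct, dotProduct_smul, smul_eq_mul, h11C, h22C, h12C, h21C, h1x, h2x, hx1, hx2,
      ← hs, RCLike.star_def, Complex.conj_ofReal, hα, hβ, _root_.map_sub, _root_.map_mul,
      Complex.conj_conj]
    linear_combination (u1 * (starRingEnd ℂ) u2 * (starRingEnd ℂ) g
      + u2 * g * (starRingEnd ℂ) u1 - (b : ℂ) * u1 * (starRingEnd ℂ) u1
      - (a : ℂ) * u2 * (starRingEnd ℂ) u2) * hgg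
  have hE2 : star z ⬝ᵥ ρ *ᵥ z =
      ((D ^ 2 * s.re - D * (b * Complex.normSq u1 + a * Complex.normSq u2)
        + D * (2 * ((starRingEnd ℂ) g * u1 * (starRingEnd ℂ) u2).re) : ℝ) : ℂ) := by
    rw [hE, Complex.mul_conj, Complex.mul_conj, Complex.add_conj,
      show s = (s.re : ℂ) from (Complex.ext (by simp) (by simp [hsim])).symm]
    push_cast
    simp only [Complex.ofReal_re]
  have h0' : 0 ≤ D ^ 2 * s.re - D * (b * Complex.normSq u1 + a * Complex.normSq u2)
      + D * (2 * ((starRingEnd ℂ) g * u1 * (starRingEnd ℂ) u2).re) := by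
    have := hρ.posSemidef.dotProduct_mulVec_nonneg z
    rw [hE2] at this
    exact Complex.zero_le_real.1 this
  -- bound the cross term
  have habs : ((starRingEnd ℂ) g * u1 * (starRingEnd ℂ) u2).re
      ≤ c * (‖u1‖ * ‖u2‖) := by
    calc ((starRingEnd ℂ) g * u1 * (starRingEnd ℂ) u2).re
        ≤ ‖(starRingEnd ℂ) g * u1 * (starRingEnd ℂ) u2‖ := Complex.re_le_norm _
      _ = c * (‖u1‖ * ‖u2‖) := by
          rw [norm_mul, norm_mul, Complex.norm_conj, Complex.norm_conj, hc, hg]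
          ring
  -- compute the quadratic form of the goal matrix
  have hsr : s = ((s.re : ℝ) : ℂ) := (Complex.ext (by simp) (by simp [hsim])).symm
  have hquad : star x ⬝ᵥ (ρ - (((b - c) / D : ℝ) : ℂ) • Matrix.vecMulVec ψ1 (star ψ1)
       - (((a - c) / D : ℝ) : ℂ) • Matrix.vecMulVec ψ2 (star ψ2)) *ᵥ x
      = s - (((b - c) / D : ℝ) : ℂ) * ((Complex.normSq u1 : ℝ) : ℂ)
          - (((a - c) / D : ℝ) : ℂ) * ((Complex.normSq u2 : ℝ) : ℂ) := by
    rw [sub_mulVec, sub_mulVec, dotProduct_sub, dotProduct_sub, smul_mulVec,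
      smul_mulVec, vecMulVec_mulVec', vecMulVec_mulVec', ← hu1, ← hu2]
    rw [dotProduct_smul, dotProduct_smul, dotProduct_smul, dotProduct_smul]
    rw [show star x ⬝ᵥ ψ1 = (starRingEnd ℂ) u1 by
      rw [hu1, show star ψ1 ⬝ᵥ x = star (star x ⬝ᵥ ψ1) by rw [star_dotProduct]]
      exact (star_star _).symm]
    rw [show star x ⬝ᵥ ψ2 = (starRingEnd ℂ) u2 by
      rw [hu2, show star ψ2 ⬝ᵥ x = star (star x ⬝ᵥ ψ2) by rw [star_dotProduct]]
      exact (star_star _).symm]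
    rw [← hs]
    simp only [smul_eq_mul]
    rw [show u1 * (starRingEnd ℂ) u1 = ((Complex.normSq u1 : ℝ) : ℂ) from Complex.mul_conj u1,
      show u2 * (starRingEnd ℂ) u2 = ((Complex.normSq u2 : ℝ) : ℂ) from Complex.mul_conj u2]
  rw [hquad, hsr,
    show ((s.re : ℝ) : ℂ) - (((b - c) / D : ℝ) : ℂ) * ((Complex.normSq u1 : ℝ) : ℂ)
          - (((a - c) / D : ℝ) : ℂ) * ((Complex.normSq u2 : ℝ) : ℂ)
        = ((s.re - (b - c) / D * Complex.normSq u1 - (a - c) / D * Complex.normSq u2 : ℝ) : ℂ) by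
      push_cast; ring,
    Complex.zero_le_real]
  -- final real inequality
  have hm1 : Complex.normSq u1 = ‖u1‖ ^ 2 := (Complex.sq_norm u1).symm
  have hm2 : Complex.normSq u2 = ‖u2‖ ^ 2 := (Complex.sq_norm u2).symm
  have ha1 : 0 ≤ ‖u1‖ := norm_nonneg u1
  have ha2 : 0 ≤ ‖u2‖ := norm_nonneg u2
  rw [hm1, hm2] at h0' ⊢
  have key3' : 0 ≤ D * (D * s.re
      - ((b - c) * ‖u1‖ ^ 2 + (a - c) * ‖u2‖ ^ 2)) := by
    nlinarith [h0', mul_le_mul_of_nonneg_left habs hD0.le,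
      mul_nonneg (mul_nonneg hD0.le hc0.le) (sq_nonneg (‖u1‖ - ‖u2‖))]
  have key3 : (b - c) * ‖u1‖ ^ 2 + (a - c) * ‖u2‖ ^ 2 ≤ D * s.re := by
    nlinarith [key3', hD0]
  have hfin : (b - c) / D * ‖u1‖ ^ 2 + (a - c) / D * ‖u2‖ ^ 2 ≤ s.re := by
    rw [div_mul_eq_mul_div, div_mul_eq_mul_div, ← add_div, div_le_iff₀ hD0]
    linarith [key3]
  linarith [hfin]
end

section
/- Let ρ be a d×d density matrix (d ≥ 2) that is singular, and suppose some eigenvector |ψ⟩ of ρ with eigenvalue 0 has all coordinates nonzero in the standard basis (full coherence rank). Then for every i ∈ {0,…,d-1} and every λ > 0, the matrix ρ - λ|i⟩⟨i| is NOT positive semidefinite; consequently the coherence weight C_w(ρ) = 1. -/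
open Matrix ComplexOrder

theorem stmt_10 (d : ℕ) (hd : 2 ≤ d) (ρ : Matrix (Fin d) (Fin d) ℂ)
    (hpsd : ρ.PosSemidef) (htr : ρ.trace = 1)
    (ψ : Fin d → ℂ) (hψker : ρ *ᵥ ψ = 0) (hψ : ∀ i, ψ i ≠ 0) :
    (∀ i : Fin d, ∀ lam : ℝ, 0 < lam →
        ¬ (ρ - (lam : ℂ) • Matrix.single i i (1 : ℂ)).PosSemidef) ∧
    coherenceWeight ρ = 1 := by
  constructor
  · intro i lam hlam h
    have h2 := h.dotProduct_mulVec_nonneg ψ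
    rw [sub_mulVec, dotProduct_sub, hψker, dotProduct_zero] at h2
    have hval : star ψ ⬝ᵥ ((lam : ℂ) • Matrix.single i i (1 : ℂ)) *ᵥ ψ
        = ((lam * Complex.normSq (ψ i) : ℝ) : ℂ) := by
      push_cast
      simp [mulVec, dotProduct, single, ite_and, Finset.sum_ite_eq,
        Complex.normSq_eq_conj_mul_self]
      ring
    rw [hval, zero_sub, ← Complex.ofReal_neg, Complex.zero_le_real, neg_nonneg] at h2
    have : 0 < lam * Complex.normSq (ψ i) :=
      mul_pos hlam (Complex.normSq_pos.2 (hψ i))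
    linarith
  · have hS : {s : ℝ | ∃ lam : Fin d → ℝ, (∀ i, 0 ≤ lam i) ∧ s = ∑ i, lam i ∧
        (ρ - Matrix.diagonal (fun i => (lam i : ℂ))).PosSemidef} = {0} := by
      ext s
      simp only [Set.mem_setOf_eq, Set.mem_singleton_iff]
      constructor
      · rintro ⟨lam, hnn, rfl, hP⟩
        have h2 := hP.dotProduct_mulVec_nonneg ψ
        rw [sub_mulVec, dotProduct_sub, hψker, dotProduct_zero] at h2
        have hval : star ψ ⬝ᵥ Matrix.diagonal (fun i => (lam i : ℂ)) *ᵥ ψ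
            = ((∑ j, lam j * Complex.normSq (ψ j) : ℝ) : ℂ) := by
          push_cast
          simp [mulVec, dotProduct, diagonal, Finset.sum_ite_eq,
            Complex.normSq_eq_conj_mul_self]
          exact Finset.sum_congr rfl fun x _ => by ring
        rw [hval, zero_sub, ← Complex.ofReal_neg, Complex.zero_le_real, neg_nonneg] at h2
        have hterm : ∀ j ∈ Finset.univ, (0:ℝ) ≤ lam j * Complex.normSq (ψ j) :=
          fun j _ => mul_nonneg (hnn j) (Complex.normSq_nonneg _)
        have hzero : ∀ j ∈ Finset.univ, lam j * Complex.normSq (ψ j) = 0 :=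
          (Finset.sum_eq_zero_iff_of_nonneg hterm).1 (le_antisymm h2 (Finset.sum_nonneg hterm))
        refine Finset.sum_eq_zero fun j _ => ?_
        have := hzero j (Finset.mem_univ j)
        have hns : Complex.normSq (ψ j) ≠ 0 := fun hc => hψ j (Complex.normSq_eq_zero.1 hc)
        exact (mul_eq_zero.1 this).resolve_right hns
      · rintro rfl
        exact ⟨0, fun _ => le_refl 0, by simp, by simpa using hpsd⟩
    unfold coherenceWeight
    rw [hS, csSup_singleton, sub_zero]
end

section
/- Let ρ = ⊕ⱼ pⱼ ρⱼ be a block-diagonal density matrix where each block ρⱼ is a density matrix supported on a subset of the standard basis partitioning {0,…,d-1}, pⱼ ≥ 0, Σⱼ pⱼ = 1. Then the coherence weight is additive over blocks: C_w(ρ) = Σⱼ pⱼ C_w(ρⱼ). -/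
open Matrix ComplexOrder

section helpers

lemma my_smul_psd {n : Type*} [Fintype n] {c : ℝ} (hc : 0 ≤ c)
    {M : Matrix n n ℂ} (hM : M.PosSemidef) : ((c:ℂ) • M).PosSemidef := by
  rw [posSemidef_iff_dotProduct_mulVec]
  constructor
  · unfold Matrix.IsHermitian
    rw [conjTranspose_smul, hM.1.eq]
    congr 1
    simp [Complex.star_def]
  · intro x
    have h0 : (0:ℂ) ≤ (c:ℂ) := by exact_mod_cast hc
    calc (0:ℂ) ≤ (c:ℂ) * (star x ⬝ᵥ (M *ᵥ x)) := mul_nonneg h0 (hM.dotProduct_mulVec_nonneg x)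
    _ = star x ⬝ᵥ (((c:ℂ) • M) *ᵥ x) := by
        rw [smul_mulVec, dotProduct_smul]; simp

lemma my_diag_nonneg {n : Type*} [Fintype n] [DecidableEq n]
    {M : Matrix n n ℂ} (hM : M.PosSemidef) (i : n) : 0 ≤ M i i := by
  simpa [mulVec, dotProduct, Pi.single_apply] using hM.dotProduct_mulVec_nonneg (Pi.single i 1)

lemma blockDiagonal'_mulVec' {N : ℕ} {m : Fin N → ℕ}
    (M : ∀ j, Matrix (Fin (m j)) (Fin (m j)) ℂ) (x : ((j : Fin N) × Fin (m j)) → ℂ) :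
    blockDiagonal' M *ᵥ x = fun ik => (M ik.1 *ᵥ fun b => x ⟨ik.1, b⟩) ik.2 := by
  funext ⟨j, a⟩
  rw [mulVec, dotProduct, ← Finset.univ_sigma_univ, Finset.sum_sigma]
  rw [Finset.sum_eq_single j]
  · simp [blockDiagonal'_apply_eq, mulVec, dotProduct]
  · intro k _ hk
    apply Finset.sum_eq_zero
    intro b _
    rw [blockDiagonal'_apply_ne _ _ _ (Ne.symm hk), zero_mul]
  · simp

lemma blockDiagonal'_posSemidef_iff {N : ℕ} {m : Fin N → ℕ}
    (M : ∀ j, Matrix (Fin (m j)) (Fin (m j)) ℂ) :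
    (blockDiagonal' M).PosSemidef ↔ ∀ j, (M j).PosSemidef := by
  constructor
  · intro h j
    have hs := h.submatrix (fun a : Fin (m j) => (⟨j, a⟩ : (j : Fin N) × Fin (m j)))
    have : (blockDiagonal' M).submatrix (fun a : Fin (m j) => (⟨j, a⟩ : (j : Fin N) × Fin (m j)))
        (fun a : Fin (m j) => (⟨j, a⟩ : (j : Fin N) × Fin (m j))) = M j := by
      ext a b; simp [blockDiagonal'_apply_eq]
    rwa [this] at hs
  · intro h
    rw [posSemidef_iff_dotProduct_mulVec]
    constructor
    · have he : (fun i => (M i)ᴴ) = M := funext fun j => (h j).1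
      rw [Matrix.IsHermitian, blockDiagonal'_conjTranspose, he]
    · intro x
      rw [blockDiagonal'_mulVec', dotProduct, ← Finset.univ_sigma_univ, Finset.sum_sigma]
      apply Finset.sum_nonneg
      intro j _
      exact (h j).dotProduct_mulVec_nonneg (fun b => x ⟨j, b⟩)

/-- The feasible set appearing in `coherenceWeight`. -/
def Wset {n : Type*} [Fintype n] [DecidableEq n] (ρ : Matrix n n ℂ) : Set ℝ :=
  {s : ℝ | ∃ lam : n → ℝ, (∀ i, 0 ≤ lam i) ∧ s = ∑ i, lam i ∧
      (ρ - Matrix.diagonal (fun i => (lam i : ℂ))).PosSemidef}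

lemma coherenceWeight_eq {n : Type*} [Fintype n] [DecidableEq n] (ρ : Matrix n n ℂ) :
    coherenceWeight ρ = 1 - sSup (Wset ρ) := rfl

lemma Wset_bddAbove {n : Type*} [Fintype n] [DecidableEq n] (ρ : Matrix n n ℂ) :
    BddAbove (Wset ρ) := by
  refine ⟨ρ.trace.re, ?_⟩
  rintro s ⟨lam, hlam, rfl, hpsd⟩
  have h1 : ∀ i, lam i ≤ (ρ i i).re := by
    intro i
    have h2 := my_diag_nonneg hpsd i
    have h3 : ((ρ - Matrix.diagonal (fun i => (lam i : ℂ))) i i) = ρ i i - (lam i : ℂ) := by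
      simp [Matrix.sub_apply]
    rw [h3] at h2
    have h4 := (Complex.nonneg_iff.mp h2).1
    simp [Complex.sub_re] at h4
    linarith
  calc ∑ i, lam i ≤ ∑ i, (ρ i i).re := Finset.sum_le_sum fun i _ => h1 i
    _ = ρ.trace.re := by rw [Matrix.trace, Complex.re_sum]; rfl

lemma Wset_zero_mem {n : Type*} [Fintype n] [DecidableEq n] {ρ : Matrix n n ℂ}
    (hρ : ρ.PosSemidef) : (0:ℝ) ∈ Wset ρ := by
  refine ⟨0, fun i => le_refl 0, by simp, ?_⟩
  simpa using hρ

end helpers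

theorem stmt_13 (N : ℕ) (m : Fin N → ℕ)
    (ρ : ∀ j, Matrix (Fin (m j)) (Fin (m j)) ℂ)
    (hρpsd : ∀ j, (ρ j).PosSemidef) (hρtr : ∀ j, (ρ j).trace = 1)
    (p : Fin N → ℝ) (hp : ∀ j, 0 ≤ p j) (hp1 : ∑ j, p j = 1) :
    coherenceWeight (Matrix.blockDiagonal' (fun j => (p j : ℂ) • ρ j)) =
      ∑ j, p j * coherenceWeight (ρ j) := by
  have hpsd' : ∀ j, ((p j : ℂ) • ρ j).PosSemidef := fun j => my_smul_psd (hp j) (hρpsd j)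
  have hbig : (blockDiagonal' (fun j => (p j : ℂ) • ρ j)).PosSemidef :=
    (blockDiagonal'_posSemidef_iff _).mpr hpsd'
  have key : sSup (Wset (blockDiagonal' fun j => (p j : ℂ) • ρ j)) =
      ∑ j, p j * sSup (Wset (ρ j)) := by
    apply le_antisymm
    · apply csSup_le ⟨0, Wset_zero_mem hbig⟩
      rintro s ⟨lam, hlam, rfl, hpsdlam⟩
      have hblock : ∀ j, ((p j : ℂ) • ρ j -
          Matrix.diagonal (fun a => (lam ⟨j, a⟩ : ℂ))).PosSemidef := by
        have hd : Matrix.diagonal (fun i : (j : Fin N) × Fin (m j) => (lam i : ℂ))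
            = blockDiagonal' (fun j => Matrix.diagonal fun a => (lam ⟨j, a⟩ : ℂ)) :=
          (blockDiagonal'_diagonal (fun j a => (lam ⟨j, a⟩ : ℂ))).symm
        rw [hd, ← blockDiagonal'_sub] at hpsdlam
        intro j
        have hj := (blockDiagonal'_posSemidef_iff _).mp hpsdlam j
        simpa [Pi.sub_apply] using hj
      rw [← Finset.univ_sigma_univ, Finset.sum_sigma]
      apply Finset.sum_le_sum
      intro j _
      rcases eq_or_lt_of_le (hp j) with hpj | hpj
      · -- p j = 0 : all lam on this block vanish
        have hz : ∀ a, lam ⟨j, a⟩ = 0 := by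
          intro a
          have h0 := my_diag_nonneg (hblock j) a
          have hent : ((p j : ℂ) • ρ j -
              Matrix.diagonal (fun a => (lam ⟨j, a⟩ : ℂ))) a a = -(lam ⟨j, a⟩ : ℂ) := by
            simp [Matrix.sub_apply, ← hpj]
          rw [hent] at h0
          have h4 := (Complex.nonneg_iff.mp h0).1
          simp at h4
          linarith [hlam ⟨j, a⟩]
        simp [hz, ← hpj]
      · -- p j > 0
        have hsj : (∑ a, (p j)⁻¹ * lam ⟨j, a⟩) ∈ Wset (ρ j) := by
          refine ⟨fun a => (p j)⁻¹ * lam ⟨j, a⟩,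
            fun a => mul_nonneg (by positivity) (hlam _), rfl, ?_⟩
          have hps := my_smul_psd (le_of_lt (inv_pos.mpr hpj)) (hblock j)
          have heq : ((((p j)⁻¹ : ℝ) : ℂ)) • ((p j : ℂ) • ρ j -
                Matrix.diagonal (fun a => (lam ⟨j, a⟩ : ℂ)))
              = ρ j - Matrix.diagonal (fun a => (((p j)⁻¹ * lam ⟨j, a⟩ : ℝ) : ℂ)) := by
            rw [smul_sub, smul_smul]
            have h1 : (((p j)⁻¹ : ℝ) : ℂ) * (p j : ℂ) = 1 := by
              rw [← Complex.ofReal_mul, inv_mul_cancel₀ hpj.ne']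
              simp
            rw [h1, one_smul]
            congr 1
            ext a b
            rcases eq_or_ne a b with rfl | hab
            · simp [Matrix.diagonal_apply_eq, smul_eq_mul, Complex.ofReal_mul]
            · simp [Matrix.diagonal_apply_ne _ hab]
          rwa [heq] at hps
        have hle : (∑ a, (p j)⁻¹ * lam ⟨j, a⟩) ≤ sSup (Wset (ρ j)) :=
          le_csSup (Wset_bddAbove _) hsj
        have h5 := mul_le_mul_of_nonneg_left hle (hp j)
        rw [Finset.mul_sum] at h5
        have h6 : ∀ a : Fin (m j), p j * ((p j)⁻¹ * lam ⟨j, a⟩) = lam ⟨j, a⟩ := by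
          intro a
          field_simp
        simp only [h6] at h5
        exact h5
    · -- lower bound
      have hmain : ∀ ε : ℝ, 0 < ε → ∑ j, p j * sSup (Wset (ρ j)) ≤
          sSup (Wset (blockDiagonal' fun j => (p j : ℂ) • ρ j)) + ε := by
        intro ε hε
        have hex : ∀ j, ∃ s ∈ Wset (ρ j), sSup (Wset (ρ j)) - ε < s := fun j =>
          exists_lt_of_lt_csSup ⟨0, Wset_zero_mem (hρpsd j)⟩ (by linarith)
        choose s hs hlt using hex
        choose lam hlamnn hlameq hlampsd using hs
        have hmem : (∑ j, p j * s j) ∈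
            Wset (blockDiagonal' fun j => (p j : ℂ) • ρ j) := by
          refine ⟨fun ik => p ik.1 * lam ik.1 ik.2,
            fun ik => mul_nonneg (hp _) (hlamnn _ _), ?_, ?_⟩
          · rw [← Finset.univ_sigma_univ, Finset.sum_sigma]
            exact Finset.sum_congr rfl fun j _ => by rw [hlameq j, Finset.mul_sum]
          · have hd : Matrix.diagonal (fun ik : (j : Fin N) × Fin (m j) =>
                  ((p ik.1 * lam ik.1 ik.2 : ℝ) : ℂ))
                = blockDiagonal' (fun j => Matrix.diagonal fun a =>
                    ((p j * lam j a : ℝ) : ℂ)) :=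
              (blockDiagonal'_diagonal (fun j a => ((p j * lam j a : ℝ) : ℂ))).symm
            rw [hd, ← blockDiagonal'_sub]
            refine (blockDiagonal'_posSemidef_iff _).mpr fun j => ?_
            have hps := my_smul_psd (hp j) (hlampsd j)
            have heq : (p j : ℂ) • (ρ j - Matrix.diagonal fun a => (lam j a : ℂ))
                = (p j : ℂ) • ρ j - Matrix.diagonal fun a => ((p j * lam j a : ℝ) : ℂ) := by
              rw [smul_sub]
              congr 1
              ext a b
              rcases eq_or_ne a b with rfl | hab
              · simp [Matrix.diagonal_apply_eq, smul_eq_mul, Complex.ofReal_mul]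
              · simp [Matrix.diagonal_apply_ne _ hab]
            rw [heq] at hps
            simpa [Pi.sub_apply] using hps
        have h1 : (∑ j, p j * s j) ≤
            sSup (Wset (blockDiagonal' fun j => (p j : ℂ) • ρ j)) :=
          le_csSup (Wset_bddAbove _) hmem
        calc ∑ j, p j * sSup (Wset (ρ j)) ≤ ∑ j, p j * (s j + ε) :=
              Finset.sum_le_sum fun j _ =>
                mul_le_mul_of_nonneg_left (by linarith [hlt j]) (hp j)
          _ = (∑ j, p j * s j) + ε := by
              simp only [mul_add]
              rw [Finset.sum_add_distrib, ← Finset.sum_mul, hp1, one_mul]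
          _ ≤ sSup (Wset (blockDiagonal' fun j => (p j : ℂ) • ρ j)) + ε := by linarith
      by_contra hcon
      push_neg at hcon
      have := hmain ((∑ j, p j * sSup (Wset (ρ j)) -
        sSup (Wset (blockDiagonal' fun j => (p j : ℂ) • ρ j))) / 2) (by linarith)
      linarith
  simp only [coherenceWeight_eq]
  rw [key]
  rw [Finset.sum_congr rfl fun j _ => mul_sub (p j) 1 (sSup (Wset (ρ j)))]
  rw [Finset.sum_sub_distrib]
  simp [hp1]
end

section
/- Let ρ = Σⱼ pⱼ|φⱼ⟩⟨φⱼ| be a density matrix where the pure states |φⱼ⟩ are supported on pairwise disjoint subsets of the standard basis, each |φⱼ⟩ has at least two nonzero coordinates (coherence rank ≥ 2), pⱼ > 0, Σⱼ pⱼ = 1. Then C_w(ρ) = 1. -/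
open Matrix ComplexOrder

lemma mulVec_sum_aux {d : ℕ} {ι : Type*} (s : Finset ι) (A : ι → Matrix (Fin d) (Fin d) ℂ)
    (x : Fin d → ℂ) : (∑ j ∈ s, A j) *ᵥ x = ∑ j ∈ s, A j *ᵥ x := by
  ext a
  simp only [mulVec, dotProduct, Matrix.sum_apply, Finset.sum_apply, Finset.sum_mul]
  rw [Finset.sum_comm]

lemma dotProduct_sum_aux {d : ℕ} {ι : Type*} (s : Finset ι) (u : Fin d → ℂ)
    (v : ι → Fin d → ℂ) : u ⬝ᵥ (∑ j ∈ s, v j) = ∑ j ∈ s, u ⬝ᵥ v j := by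
  simp only [dotProduct, Finset.sum_apply, Finset.mul_sum]
  rw [Finset.sum_comm]

lemma quad_vecMulVec {d : ℕ} (v x : Fin d → ℂ) :
    star x ⬝ᵥ ((Matrix.vecMulVec v (star v)) *ᵥ x) =
      star (star v ⬝ᵥ x) * (star v ⬝ᵥ x) := by
  simp only [mulVec, dotProduct, vecMulVec_apply, Pi.star_apply, star_sum, star_mul',
    star_star, Finset.sum_mul, Finset.mul_sum]
  rw [Finset.sum_comm]
  apply Finset.sum_congr rfl
  intro a _
  apply Finset.sum_congr rfl
  intro b _
  ring

lemma herm_vecMulVec {d : ℕ} (v : Fin d → ℂ) :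
    (Matrix.vecMulVec v (star v)).IsHermitian := by
  ext a b
  simp only [conjTranspose_apply, vecMulVec_apply, Pi.star_apply, star_mul', star_star]
  ring

theorem stmt_14 (d N : ℕ) (φ : Fin N → Fin d → ℂ)
    (hunit : ∀ j, star (φ j) ⬝ᵥ φ j = 1)
    (hdisj : ∀ j k, j ≠ k → ∀ i, φ j i = 0 ∨ φ k i = 0)
    (hrank : ∀ j, ∃ i i' : Fin d, i ≠ i' ∧ φ j i ≠ 0 ∧ φ j i' ≠ 0)
    (p : Fin N → ℝ) (hp : ∀ j, 0 < p j) (hp1 : ∑ j, p j = 1) :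
    coherenceWeight (∑ j, (p j : ℂ) • Matrix.vecMulVec (φ j) (star (φ j))) = 1 := by
  classical
  set ρ : Matrix (Fin d) (Fin d) ℂ := ∑ j, (p j : ℂ) • Matrix.vecMulVec (φ j) (star (φ j))
    with hρ
  -- quadratic form of ρ
  have hquad : ∀ x : Fin d → ℂ,
      star x ⬝ᵥ (ρ *ᵥ x) = ∑ k, (p k : ℂ) * (star (star (φ k) ⬝ᵥ x) * (star (φ k) ⬝ᵥ x)) := by
    intro x
    rw [hρ, mulVec_sum_aux, dotProduct_sum_aux]
    apply Finset.sum_congr rfl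
    intro k _
    rw [smul_mulVec, dotProduct_smul, quad_vecMulVec]
    simp [smul_eq_mul]
  have hρpsd : ρ.PosSemidef := by
    refine posSemidef_iff_dotProduct_mulVec.mpr ⟨?_, ?_⟩
    · show ρᴴ = ρ
      rw [hρ, conjTranspose_sum]
      apply Finset.sum_congr rfl
      intro j _
      rw [conjTranspose_smul, herm_vecMulVec (φ j), Complex.star_def, Complex.conj_ofReal]
    · intro x
      rw [hquad]
      apply Finset.sum_nonneg
      intro k _
      exact mul_nonneg (by exact_mod_cast (hp k).le) (star_mul_self_nonneg _)
  -- key: if ρ - diag lam is PSD with lam ≥ 0, and x is "orthogonal" to every φ k,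
  -- then lam vanishes wherever x doesn't
  have key : ∀ (lam : Fin d → ℝ), (∀ a, 0 ≤ lam a) →
      (ρ - Matrix.diagonal (fun a => (lam a : ℂ))).PosSemidef →
      ∀ (x : Fin d → ℂ), (∀ k, star (φ k) ⬝ᵥ x = 0) → ∀ i, x i ≠ 0 → lam i = 0 := by
    intro lam hlam hpsd x hx i hxi
    have h0 := hpsd.dotProduct_mulVec_nonneg x
    rw [sub_mulVec, dotProduct_sub, hquad] at h0
    have hρ0 : ∑ k, (p k : ℂ) * (star (star (φ k) ⬝ᵥ x) * (star (φ k) ⬝ᵥ x)) = 0 := by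
      apply Finset.sum_eq_zero
      intro k _
      rw [hx k]
      simp
    rw [hρ0] at h0
    have hdiag : star x ⬝ᵥ (Matrix.diagonal (fun a => (lam a : ℂ)) *ᵥ x)
        = ((∑ a, lam a * Complex.normSq (x a) : ℝ) : ℂ) := by
      push_cast
      simp only [dotProduct, mulVec_diagonal, Pi.star_apply]
      apply Finset.sum_congr rfl
      intro a _
      rw [show star (x a) * ((lam a : ℂ) * x a)
            = (lam a : ℂ) * (star (x a) * x a) by ring, Complex.star_def,
        ← Complex.normSq_eq_conj_mul_self]
    rw [hdiag, zero_sub, neg_nonneg] at h0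
    have hr : (∑ a, lam a * Complex.normSq (x a)) ≤ 0 := by exact_mod_cast h0
    have hterms : ∀ a ∈ Finset.univ, (0 : ℝ) ≤ lam a * Complex.normSq (x a) :=
      fun a _ => mul_nonneg (hlam a) (Complex.normSq_nonneg _)
    have hsum0 : ∑ a, lam a * Complex.normSq (x a) = 0 :=
      le_antisymm hr (Finset.sum_nonneg hterms)
    have hi0 := (Finset.sum_eq_zero_iff_of_nonneg hterms).1 hsum0 i (Finset.mem_univ i)
    exact (mul_eq_zero.1 hi0).resolve_right fun h => hxi (Complex.normSq_eq_zero.1 h)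
  have hzero : ∀ (lam : Fin d → ℝ), (∀ a, 0 ≤ lam a) →
      (ρ - Matrix.diagonal (fun a => (lam a : ℂ))).PosSemidef → ∀ i, lam i = 0 := by
    intro lam hlam hpsd i
    by_cases hc : ∃ j, φ j i ≠ 0
    · obtain ⟨j, hji⟩ := hc
      obtain ⟨i1, i2, h12, h1, h2⟩ := hrank j
      obtain ⟨i', hi'ne, hi'φ⟩ : ∃ i', i ≠ i' ∧ φ j i' ≠ 0 := by
        by_cases h : i1 = i
        · exact ⟨i2, fun e => h12 (h.trans e), h2⟩
        · exact ⟨i1, fun e => h e.symm, h1⟩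
      set x : Fin d → ℂ :=
        Pi.single i (star (φ j i))⁻¹ + Pi.single i' (-(star (φ j i'))⁻¹) with hxdef
      refine key lam hlam hpsd x ?_ i ?_
      · intro k
        rw [hxdef, dotProduct_add, dotProduct_single, dotProduct_single]
        by_cases hkj : k = j
        · subst hkj
          simp only [Pi.star_apply]
          rw [mul_inv_cancel₀ (star_ne_zero.2 hji), mul_neg,
            mul_inv_cancel₀ (star_ne_zero.2 hi'φ)]
          ring
        · have hk1 : φ k i = 0 := (hdisj j k (fun e => hkj e.symm) i).resolve_left hji
          have hk2 : φ k i' = 0 := (hdisj j k (fun e => hkj e.symm) i').resolve_left hi'φ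
          simp [hk1, hk2]
      · rw [hxdef]
        simp only [Pi.add_apply, Pi.single_eq_same, Pi.single_eq_of_ne hi'ne,
          add_zero]
        exact inv_ne_zero (star_ne_zero.2 hji)
    · push_neg at hc
      refine key lam hlam hpsd (Pi.single i 1) ?_ i (by simp)
      intro k
      rw [dotProduct_single]
      simp [hc k]
  have hset : {s : ℝ | ∃ lam : Fin d → ℝ, (∀ i, 0 ≤ lam i) ∧ s = ∑ i, lam i ∧
      (ρ - Matrix.diagonal (fun i => (lam i : ℂ))).PosSemidef} = {0} := by
    ext s
    simp only [Set.mem_setOf_eq, Set.mem_singleton_iff]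
    constructor
    · rintro ⟨lam, hlam, hs, hpsd⟩
      rw [hs]
      exact Finset.sum_eq_zero fun i _ => hzero lam hlam hpsd i
    · rintro rfl
      exact ⟨0, fun i => le_refl 0, by simp, by simpa using hρpsd⟩
  rw [coherenceWeight, hset, csSup_singleton]
  norm_num
end

section
/- For a pure state |φ⟩ with at least two nonzero coordinates in the standard basis, the coherence weight is maximal: C_w(|φ⟩⟨φ|) = 1. That is, for any nonnegative λᵢ with Σᵢλᵢ > 0, the matrix |φ⟩⟨φ| - Σᵢλᵢ|i⟩⟨i| is not positive semidefinite. -/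
open Matrix ComplexOrder

private lemma sum_two {d : ℕ} (f : Fin d → ℂ) (i j : Fin d) (hij : i ≠ j)
    (h : ∀ k, k ≠ i → k ≠ j → f k = 0) : ∑ k, f k = f i + f j := by
  rw [← Finset.sum_pair hij]
  refine (Finset.sum_subset (Finset.subset_univ _) ?_).symm
  intro k _ hk
  simp only [Finset.mem_insert, Finset.mem_singleton, not_or] at hk
  exact h k hk.1 hk.2

private lemma outer_mulVec {d : ℕ} (φ ψ : Fin d → ℂ) :
    vecMulVec φ (star φ) *ᵥ ψ = (star φ ⬝ᵥ ψ) • φ := by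
  ext k
  simp [mulVec, vecMulVec_apply, dotProduct, Finset.mul_sum, mul_comm, mul_assoc, mul_left_comm]

private lemma key {d : ℕ} (φ : Fin d → ℂ)
    (hrank : ∃ i i' : Fin d, i ≠ i' ∧ φ i ≠ 0 ∧ φ i' ≠ 0) :
    ∀ lam : Fin d → ℝ, (∀ i, 0 ≤ lam i) → 0 < ∑ i, lam i →
      ¬ (Matrix.vecMulVec φ (star φ) -
          Matrix.diagonal (fun i => (lam i : ℂ))).PosSemidef := by
  intro lam hlam hsum hPSD
  -- pick i0 with lam i0 > 0
  obtain ⟨i0, -, hi0⟩ : ∃ i ∈ Finset.univ, 0 < lam i := by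
    by_contra h
    push_neg at h
    have : ∑ i, lam i ≤ 0 := Finset.sum_nonpos fun i hi => le_of_not_gt (by
      intro hc; exact absurd (le_antisymm (h i hi) (hlam i)) (ne_of_gt hc))
    linarith
  -- pick j ≠ i0 with φ j ≠ 0
  obtain ⟨i, i', hii', hi, hi'⟩ := hrank
  obtain ⟨j, hj0, hjne⟩ : ∃ j, j ≠ i0 ∧ φ j ≠ 0 := by
    by_cases h : i = i0
    · exact ⟨i', fun hc => hii' (h.trans hc.symm), hi'⟩
    · exact ⟨i, h, hi⟩
  classical
  set ψ : Fin d → ℂ := fun k =>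
    if k = i0 then (starRingEnd ℂ) (φ j) else if k = j then -(starRingEnd ℂ) (φ i0) else 0
    with hψ
  have hψi0 : ψ i0 = (starRingEnd ℂ) (φ j) := by simp [hψ]
  have hψj : ψ j = -(starRingEnd ℂ) (φ i0) := by simp [hψ, hj0]
  have hψ0 : ∀ k, k ≠ i0 → k ≠ j → ψ k = 0 := by intro k h1 h2; simp [hψ, h1, h2]
  -- orthogonality
  have horth : star φ ⬝ᵥ ψ = 0 := by
    have : ∀ k, k ≠ i0 → k ≠ j → (star φ) k * ψ k = 0 := fun k h1 h2 => by
      rw [hψ0 k h1 h2, mul_zero]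
    rw [dotProduct, sum_two _ i0 j (Ne.symm hj0) this, hψi0, hψj]
    simp [Pi.star_apply]
    ring
  -- quadratic form value
  have hquad := hPSD.dotProduct_mulVec_nonneg ψ
  have hval : star ψ ⬝ᵥ ((Matrix.vecMulVec φ (star φ) -
      Matrix.diagonal (fun i => (lam i : ℂ))) *ᵥ ψ)
      = -(((lam i0 * Complex.normSq (φ j) + lam j * Complex.normSq (φ i0) : ℝ)) : ℂ) := by
    rw [sub_mulVec, dotProduct_sub, outer_mulVec, horth, zero_smul, dotProduct_zero, zero_sub]
    congr 1
    have hdiag : star ψ ⬝ᵥ (Matrix.diagonal (fun i => (lam i : ℂ)) *ᵥ ψ)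
        = ∑ k, (lam k : ℂ) * ((starRingEnd ℂ) (ψ k) * ψ k) := by
      simp [dotProduct, mulVec_diagonal, mul_comm, mul_assoc, mul_left_comm]
    rw [hdiag, sum_two _ i0 j (Ne.symm hj0) (fun k h1 h2 => by rw [hψ0 k h1 h2]; ring)]
    rw [hψi0, hψj]
    push_cast
    simp only [map_neg, RingHom.id_apply, Complex.conj_conj, mul_neg, neg_mul, neg_neg]
    rw [Complex.mul_conj, Complex.mul_conj]
  rw [hval] at hquad
  have hpos : 0 < lam i0 * Complex.normSq (φ j) + lam j * Complex.normSq (φ i0) := by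
    have := Complex.normSq_pos.2 hjne
    have := hlam j
    have := Complex.normSq_nonneg (φ i0)
    nlinarith
  rw [Complex.le_def] at hquad
  simp only [Complex.zero_re, Complex.neg_re, Complex.ofReal_re] at hquad
  linarith [hquad.1]

theorem stmt_15 (d : ℕ) (φ : Fin d → ℂ) (hunit : star φ ⬝ᵥ φ = 1)
    (hrank : ∃ i i' : Fin d, i ≠ i' ∧ φ i ≠ 0 ∧ φ i' ≠ 0) :
    coherenceWeight (Matrix.vecMulVec φ (star φ)) = 1 ∧
    ∀ lam : Fin d → ℝ, (∀ i, 0 ≤ lam i) → 0 < ∑ i, lam i →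
      ¬ (Matrix.vecMulVec φ (star φ) -
          Matrix.diagonal (fun i => (lam i : ℂ))).PosSemidef := by
  refine ⟨?_, key φ hrank⟩
  have hset : {s : ℝ | ∃ lam : Fin d → ℝ, (∀ i, 0 ≤ lam i) ∧ s = ∑ i, lam i ∧
      (Matrix.vecMulVec φ (star φ) -
        Matrix.diagonal (fun i => (lam i : ℂ))).PosSemidef} = {0} := by
    ext s
    simp only [Set.mem_setOf_eq, Set.mem_singleton_iff]
    constructor
    · rintro ⟨lam, hlam, rfl, hPSD⟩
      by_contra h
      have hge : 0 ≤ ∑ i, lam i := Finset.sum_nonneg fun i _ => hlam i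
      have hgt : 0 < ∑ i, lam i := lt_of_le_of_ne hge (Ne.symm h)
      exact key φ hrank lam hlam hgt hPSD
    · rintro rfl
      refine ⟨0, fun i => le_rfl, by simp, ?_⟩
      have : Matrix.diagonal (fun i : Fin d => (((0 : Fin d → ℝ) i : ℝ) : ℂ)) = 0 := by
        simp
      rw [this, sub_zero]
      refine Matrix.PosSemidef.of_dotProduct_mulVec_nonneg ?_ ?_
      · ext i j
        simp [conjTranspose_apply, vecMulVec_apply, Pi.star_apply, mul_comm]
      · intro x
        rw [outer_mulVec]
        have : star x ⬝ᵥ (star φ ⬝ᵥ x) • φ = (star φ ⬝ᵥ x) * (star x ⬝ᵥ φ) := by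
          simp [dotProduct_smul, mul_comm]
        rw [this]
        have hconj : star x ⬝ᵥ φ = (starRingEnd ℂ) (star φ ⬝ᵥ x) := by
          simp [dotProduct, map_sum, mul_comm]
        rw [hconj, mul_comm, ← Complex.normSq_eq_conj_mul_self]
        exact_mod_cast Complex.normSq_nonneg _
  unfold coherenceWeight
  rw [hset, csSup_singleton, sub_zero]
end

section
/- Let ρ be a qutrit (3×3) density matrix of rank 2 with C_w(ρ) = 1. Then its eigenvector |ψ₀⟩ corresponding to the zero eigenvalue has all three coordinates nonzero in the standard basis (full coherence rank). -/
open Matrix ComplexOrder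

lemma vecMulVec_mulVec'_s16 {n : Type*} [Fintype n] (w v x : n → ℂ) :
    Matrix.vecMulVec w v *ᵥ x = (v ⬝ᵥ x) • w := by
  funext j
  simp [Matrix.mulVec, dotProduct, Matrix.vecMulVec_apply, Finset.mul_sum, mul_assoc,
    mul_comm, mul_left_comm]

theorem stmt_16 (ρ : Matrix (Fin 3) (Fin 3) ℂ)
    (hpsd : ρ.PosSemidef) (htr : ρ.trace = 1) (hrank : ρ.rank = 2)
    (ψ0 : Fin 3 → ℂ) (hψ0 : star ψ0 ⬝ᵥ ψ0 = 1) (hker : ρ *ᵥ ψ0 = 0)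
    (hCw : coherenceWeight ρ = 1) :
    ∀ i, ψ0 i ≠ 0 := by
  intro i hzero
  classical
  have hψ0ne : ψ0 ≠ 0 := by
    intro h
    rw [h] at hψ0
    simp at hψ0
  -- kernel of ρ is the span of ψ0
  have hkermem : ψ0 ∈ LinearMap.ker ρ.mulVecLin := by
    simpa [Matrix.mulVecLin_apply] using hker
  have hfrk : Module.finrank ℂ (LinearMap.ker ρ.mulVecLin) = 1 := by
    have h1 := LinearMap.finrank_range_add_finrank_ker ρ.mulVecLin
    have h2 : Module.finrank ℂ ↥(LinearMap.range ρ.mulVecLin) = 2 := hrank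
    have h3 : Module.finrank ℂ (Fin 3 → ℂ) = 3 := by simp
    omega
  have hkereq : LinearMap.ker ρ.mulVecLin = Submodule.span ℂ {ψ0} := by
    refine (Submodule.eq_of_le_of_finrank_le (Submodule.span_le.2 ?_) ?_).symm
    · simpa using hkermem
    · rw [hfrk, finrank_span_singleton hψ0ne]
  -- σ = ρ + |ψ0⟩⟨ψ0| is injective
  set σ : Matrix (Fin 3) (Fin 3) ℂ := ρ + Matrix.vecMulVec ψ0 (star ψ0) with hσ
  have hσherm : σ.IsHermitian := by
    refine hpsd.1.add ?_
    ext j k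
    simp [Matrix.conjTranspose_apply, Matrix.vecMulVec_apply, mul_comm]
  have hσψ0 : σ *ᵥ ψ0 = ψ0 := by
    rw [hσ, Matrix.add_mulVec, hker, vecMulVec_mulVec'_s16, hψ0]
    simp
  have hσinj : Function.Injective σ.mulVecLin := by
    rw [← LinearMap.ker_eq_bot, Submodule.eq_bot_iff]
    intro v hv
    rw [LinearMap.mem_ker, Matrix.mulVecLin_apply] at hv
    have hq : star v ⬝ᵥ ρ *ᵥ v + (star ψ0 ⬝ᵥ v) • (star v ⬝ᵥ ψ0) = 0 := by
      have : star v ⬝ᵥ σ *ᵥ v = 0 := by rw [hv, dotProduct_zero]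
      rw [hσ, Matrix.add_mulVec, dotProduct_add, vecMulVec_mulVec'_s16,
        dotProduct_smul] at this
      exact this
    have hsd : star v ⬝ᵥ ψ0 = star (star ψ0 ⬝ᵥ v) := by
      simp [dotProduct, Pi.star_apply, map_sum, mul_comm]
    have hterm2 : (0:ℂ) ≤ (star ψ0 ⬝ᵥ v) • (star v ⬝ᵥ ψ0) := by
      rw [hsd, smul_eq_mul]
      exact mul_star_self_nonneg _
    have hterm1 : (0:ℂ) ≤ star v ⬝ᵥ ρ *ᵥ v := hpsd.dotProduct_mulVec_nonneg v
    obtain ⟨h1, h2⟩ := (add_eq_zero_iff_of_nonneg hterm1 hterm2).1 hq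
    -- from h2 : ⟨ψ0, v⟩ = 0
    have hdv : star ψ0 ⬝ᵥ v = 0 := by
      rw [hsd, smul_eq_mul] at h2
      rcases mul_eq_zero.1 h2 with h | h
      · exact h
      · exact star_eq_zero.1 h
    -- from h1 : v ∈ ker ρ
    have hv2 : v ∈ Submodule.span ℂ {ψ0} := by
      rw [← hkereq, LinearMap.mem_ker, Matrix.mulVecLin_apply]
      exact (hpsd.dotProduct_mulVec_zero_iff v).1 h1
    obtain ⟨c, rfl⟩ := Submodule.mem_span_singleton.1 hv2
    rw [dotProduct_smul, hψ0, smul_eq_mul, mul_one] at hdv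
    rw [hdv, zero_smul]
  -- find w with ρ w = e_i
  obtain ⟨w, hw⟩ := (LinearMap.injective_iff_surjective.1 hσinj) (Pi.single i 1)
  rw [Matrix.mulVecLin_apply] at hw
  have hψ0w : star ψ0 ⬝ᵥ w = 0 := by
    have h1 : star ψ0 ᵥ* σ = star ψ0 := by
      have := congrArg star hσψ0
      rwa [Matrix.star_mulVec, hσherm.eq] at this
    have h2 : star ψ0 ⬝ᵥ σ *ᵥ w = star ψ0 ⬝ᵥ w := by
      rw [Matrix.dotProduct_mulVec, h1]
    rw [hw, dotProduct_single, mul_one] at h2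
    rw [← h2]
    simp [Pi.star_apply, hzero]
  have hρw : ρ *ᵥ w = Pi.single i 1 := by
    have : σ *ᵥ w = ρ *ᵥ w + (star ψ0 ⬝ᵥ w) • ψ0 := by
      rw [hσ, Matrix.add_mulVec, vecMulVec_mulVec'_s16]
    rw [hw, hψ0w, zero_smul, add_zero] at this
    exact this.symm
  -- a = ⟨w, ρ w⟩ is a positive real
  have haval : star w ⬝ᵥ ρ *ᵥ w = star (w i) := by
    rw [hρw, dotProduct_single, mul_one, Pi.star_apply]
  have hapos : (0:ℂ) < star w ⬝ᵥ ρ *ᵥ w := by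
    rcases lt_or_eq_of_le (hpsd.dotProduct_mulVec_nonneg w) with h | h
    · exact h
    · exfalso
      have := (hpsd.dotProduct_mulVec_zero_iff w).1 h.symm
      rw [hρw] at this
      have := congrFun this i
      simp at this
  set r : ℝ := (star w ⬝ᵥ ρ *ᵥ w).re with hr
  have hrpos : 0 < r := by
    rw [Complex.lt_def] at hapos
    simpa [hr] using hapos.1
  have harr : star w ⬝ᵥ ρ *ᵥ w = (r : ℂ) := by
    rw [Complex.lt_def] at hapos
    rw [Complex.ext_iff]
    constructor
    · simp [hr]
    · simp only [Complex.ofReal_im, ← hapos.2, Complex.zero_im]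
  -- the witness lam
  set lam : Fin 3 → ℝ := fun j => if j = i then 1 / r else 0 with hlam
  have hlnn : ∀ j, 0 ≤ lam j := by
    intro j
    rw [hlam]
    dsimp only
    split
    · positivity
    · exact le_refl 0
  have hsum : ∑ j, lam j = 1 / r := by
    rw [hlam]
    simp
  -- the subtracted matrix is PSD
  have hDpsd : (ρ - Matrix.diagonal (fun j => (lam j : ℂ))).PosSemidef := by
    refine Matrix.PosSemidef.of_dotProduct_mulVec_nonneg ?_ ?_
    · refine hpsd.1.sub ?_
      refine Matrix.isHermitian_diagonal_of_self_adjoint _ ?_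
      funext j
      simp [Pi.star_apply, ← Complex.ofReal_def]
    · intro v
      -- ⟨v, (ρ - D) v⟩ = ⟨u, ρ u⟩ for u = v - (v i / r) • w
      set u : Fin 3 → ℂ := v - (v i / (r:ℂ)) • w with hu
      have hwv : star w ⬝ᵥ ρ *ᵥ v = v i := by
        rw [Matrix.dotProduct_mulVec, ← hpsd.1.eq, ← Matrix.star_mulVec, hρw,
          ← Pi.single_star, star_one, single_dotProduct, one_mul]
      have hvw : star v ⬝ᵥ ρ *ᵥ w = star (v i) := by
        rw [hρw, dotProduct_single, mul_one, Pi.star_apply]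
      have key : star v ⬝ᵥ (ρ - Matrix.diagonal (fun j => (lam j : ℂ))) *ᵥ v
          = star u ⬝ᵥ ρ *ᵥ u := by
        have hDv : star v ⬝ᵥ (Matrix.diagonal (fun j => (lam j : ℂ))) *ᵥ v
            = (1/(r:ℂ)) * (star (v i) * v i) := by
          rw [dotProduct]
          rw [Fintype.sum_eq_single i]
          · simp [Matrix.mulVec_diagonal, hlam, Pi.star_apply]
            ring
          · intro j hj
            simp [Matrix.mulVec_diagonal, hlam, hj]
        have hexp : star u ⬝ᵥ ρ *ᵥ u
            = star v ⬝ᵥ ρ *ᵥ v - (v i / (r:ℂ)) * star (v i)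
              - star (v i / (r:ℂ)) * (v i) + star (v i / (r:ℂ)) * (v i / (r:ℂ)) * (r:ℂ) := by
          rw [hu]
          have hstar : star (v - (v i / (r:ℂ)) • w) = star v - star (v i / (r:ℂ)) • star w := by
            funext j
            simp [Pi.star_apply, Pi.sub_apply, star_mul']
          rw [hstar, Matrix.mulVec_sub, Matrix.mulVec_smul]
          rw [sub_dotProduct, dotProduct_sub, dotProduct_sub,
            smul_dotProduct, smul_dotProduct, dotProduct_smul,
            dotProduct_smul]
          rw [hvw, hwv, harr]
          simp only [smul_eq_mul]
          ring
        rw [Matrix.sub_mulVec, dotProduct_sub, hDv, hexp]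
        have hrne : (r:ℂ) ≠ 0 := by
          simpa using ne_of_gt hrpos
        have hsdiv : star (v i / (r:ℂ)) = star (v i) / (r:ℂ) := by
          rw [star_div₀]
          norm_num
        rw [hsdiv]
        field_simp
        ring
      rw [key]
      exact hpsd.dotProduct_mulVec_nonneg u
  -- conclude via the sSup
  set S : Set ℝ := {s : ℝ | ∃ lam : Fin 3 → ℝ, (∀ i, 0 ≤ lam i) ∧ s = ∑ i, lam i ∧
      (ρ - Matrix.diagonal (fun i => (lam i : ℂ))).PosSemidef} with hS
  have hmem : (1 / r) ∈ S := ⟨lam, hlnn, hsum.symm, hDpsd⟩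
  have hbdd : BddAbove S := by
    refine ⟨1, ?_⟩
    rintro s ⟨l, hl, rfl, hlpsd⟩
    -- trace of PSD matrix is nonneg
    have htrnn : (0:ℂ) ≤ (ρ - Matrix.diagonal (fun j => (l j : ℂ))).trace := by
      rw [Matrix.trace]
      refine Finset.sum_nonneg fun j _ => ?_
      have h2 := hlpsd.dotProduct_mulVec_nonneg (Pi.single j 1)
      rw [← Pi.single_star, star_one, Matrix.mulVec_single, single_dotProduct] at h2
      simpa [Matrix.diag] using h2
    have htrv : (ρ - Matrix.diagonal (fun j => (l j : ℂ))).trace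
        = ((1 - ∑ j, l j : ℝ) : ℂ) := by
      rw [Matrix.trace_sub, htr, Matrix.trace_diagonal]
      push_cast
      ring
    rw [htrv] at htrnn
    have := Complex.zero_le_real.1 htrnn
    linarith
  have hle : 1 / r ≤ sSup S := le_csSup hbdd hmem
  have hsup0 : sSup S = 0 := by
    have : coherenceWeight ρ = 1 - sSup S := rfl
    rw [this] at hCw
    linarith
  rw [hsup0] at hle
  have : 0 < 1 / r := by positivity
  linarith
end
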